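/- For every continuum X there exist a metrizable continuum Y and a continuous surjection q : X → Y such that: Y is chainable if and only if X is chainable; Y has span zero if and only if X has span zero; Y has semispan zero if and only if X has semispan zero; Y has surjective span zero if and only if X has surjective span zero; and Y has surjective semispan zero if and only if X has surjective semispan zero. -/

import Mathlib

/-- A continuum `X` is chainable if every finite open cover has a finite open
refinement that can be enumerated as `V_0, …, V_{n-1}` with
`V_i ∩ V_j ≠ ∅` iff `|i - j| ≤ 1`. -/
def Chainable (X : Type*) [TopologicalSpace X] : Prop :=
  ∀ U : Finset (Set X), (∀ u ∈ U, IsOpen u) → ⋃₀ (U : Set (Set X)) = Set.univ →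
    ∃ (n : ℕ) (V : Fin n → Set X),
      (∀ i, IsOpen (V i)) ∧ (⋃ i, V i) = Set.univ ∧
      (∀ i, ∃ u ∈ U, V i ⊆ u) ∧
      ∀ i j : Fin n, (V i ∩ V j).Nonempty ↔ |((i : ℕ) : ℤ) - ((j : ℕ) : ℤ)| ≤ 1

/-- A continuum has span zero if every subcontinuum `Z` of `X × X` with
`π₁[Z] = π₂[Z]` meets the diagonal. -/
def SpanZero (X : Type*) [TopologicalSpace X] : Prop :=
  ∀ Z : Set (X × X), IsClosed Z → IsConnected Z →
    Prod.fst '' Z = Prod.snd '' Z → ∃ x : X, (x, x) ∈ Z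

/-- A continuum has semispan zero if every subcontinuum `Z` of `X × X` with
`π₁[Z] ⊆ π₂[Z]` meets the diagonal. -/
def SemispanZero (X : Type*) [TopologicalSpace X] : Prop :=
  ∀ Z : Set (X × X), IsClosed Z → IsConnected Z →
    Prod.fst '' Z ⊆ Prod.snd '' Z → ∃ x : X, (x, x) ∈ Z

/-- A continuum has surjective span zero if every subcontinuum `Z` of `X × X` with
`π₁[Z] = π₂[Z] = X` meets the diagonal. -/
def SurjectiveSpanZero (X : Type*) [TopologicalSpace X] : Prop :=
  ∀ Z : Set (X × X), IsClosed Z → IsConnected Z →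
    Prod.fst '' Z = Set.univ → Prod.snd '' Z = Set.univ → ∃ x : X, (x, x) ∈ Z

/-- A continuum has surjective semispan zero if every subcontinuum `Z` of `X × X`
with `π₂[Z] = X` meets the diagonal. -/
def SurjectiveSemispanZero (X : Type*) [TopologicalSpace X] : Prop :=
  ∀ Z : Set (X × X), IsClosed Z → IsConnected Z →
    Prod.snd '' Z = Set.univ → ∃ x : X, (x, x) ∈ Z


open Set Topology Filter

namespace MR
set_option maxHeartbeats 1000000

set_option linter.unusedSectionVars false
variable {X : Type*} [TopologicalSpace X] [CompactSpace X] [T2Space X]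

/-- continuous real functions on X -/
def Ctf (X : Type*) [TopologicalSpace X] : Type _ := {g : X → ℝ // Continuous g}

instance : Inhabited (Ctf X) := ⟨⟨fun _ => 0, continuous_const⟩⟩

def eq1 (G : Finset (Ctf X)) (x x' : X) : Prop := ∀ g ∈ G, g.1 x = g.1 x'

def eq2 (G : Finset (Ctf X)) (z w : X × X) : Prop := eq1 G z.1 w.1 ∧ eq1 G z.2 w.2

lemma eq1_mono {G G' : Finset (Ctf X)} (h : G ⊆ G') {x x'} (he : eq1 G' x x') : eq1 G x x' :=
  fun g hg => he g (h hg)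

lemma eq1_refl (G : Finset (Ctf X)) (x : X) : eq1 G x x := fun _ _ => rfl

/-- Urysohn-type pointed lemma -/
lemma exists_ctf_pt (x : X) (V : Set X) (hV : IsOpen V) (hx : x ∈ V) :
    ∃ g : Ctf X, g.1 x = 1 ∧ ∀ x', g.1 x' ≠ 0 → x' ∈ V := by
  obtain ⟨f, hf0, hf1, -⟩ := exists_continuous_zero_one_of_isClosed
    (X := X) (s := Vᶜ) (t := {x}) (isClosed_compl_iff.2 hV) isClosed_singleton
    (by
      rw [Set.disjoint_singleton_right]
      simpa using hx)
  refine ⟨⟨f, f.continuous⟩, hf1 rfl, fun x' hx' => ?_⟩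
  by_contra h
  exact hx' (hf0 h)

/-- every finite open cover is refined by fibers of finitely many functions -/
lemma exists_fiber_refine (U : Finset (Set X)) (hO : ∀ u ∈ U, IsOpen u)
    (hc : ⋃₀ (U : Set (Set X)) = univ) :
    ∃ G : Finset (Ctf X), ∀ x, ∃ u ∈ U, ∀ x', eq1 G x x' → x' ∈ u := by
  classical
  have hch : ∀ x : X, ∃ u ∈ U, ∃ g : Ctf X, g.1 x = 1 ∧ ∀ x', g.1 x' ≠ 0 → x' ∈ u := by
    intro x
    have : x ∈ ⋃₀ (U : Set (Set X)) := by rw [hc]; trivial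
    obtain ⟨u, hu, hxu⟩ := this
    obtain ⟨g, hg1, hg0⟩ := exists_ctf_pt x u (hO u hu) hxu
    exact ⟨u, hu, g, hg1, hg0⟩
  choose uu huuU gg hg1 hg0 using hch
  have hcov : univ ⊆ ⋃ x : X, {x' | (1:ℝ)/2 < (gg x).1 x'} := by
    intro y _
    refine mem_iUnion.2 ⟨y, ?_⟩
    simp only [mem_setOf_eq, hg1 y]
    norm_num
  obtain ⟨t, ht⟩ := IsCompact.elim_finite_subcover (isCompact_univ (X := X))
    (fun x => {x' | (1:ℝ)/2 < (gg x).1 x'})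
    (fun x => isOpen_lt continuous_const (gg x).2) hcov
  refine ⟨t.image gg, fun y => ?_⟩
  obtain ⟨x, hxt, hy⟩ := mem_iUnion₂.1 (ht (mem_univ y))
  simp only [mem_setOf_eq] at hy
  refine ⟨uu x, huuU x, fun x' hx' => ?_⟩
  have heq : (gg x).1 y = (gg x).1 x' := hx' _ (Finset.mem_image_of_mem _ hxt)
  apply hg0 x
  intro h0
  rw [heq, h0] at hy
  norm_num at hy

/-- rectangle lemma: fibers of finitely many functions refine a 3-element open cover of X × X -/
lemma exists_fiber_refine3 (O₁ O₂ O₃ : Set (X × X)) (h1 : IsOpen O₁) (h2 : IsOpen O₂)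
    (h3 : IsOpen O₃) (hcov : O₁ ∪ O₂ ∪ O₃ = univ) :
    ∃ G : Finset (Ctf X), ∀ z : X × X,
      (∀ w, eq2 G z w → w ∈ O₁) ∨ (∀ w, eq2 G z w → w ∈ O₂) ∨ (∀ w, eq2 G z w → w ∈ O₃) := by
  classical
  have hch : ∀ z : X × X, ∃ O, (O = O₁ ∨ O = O₂ ∨ O = O₃) ∧
      ∃ g h : Ctf X, g.1 z.1 = 1 ∧ h.1 z.2 = 1 ∧
        ∀ w : X × X, g.1 w.1 ≠ 0 → h.1 w.2 ≠ 0 → w ∈ O := by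
    intro z
    have hz : z ∈ O₁ ∪ O₂ ∪ O₃ := by rw [hcov]; trivial
    have : ∃ O, (O = O₁ ∨ O = O₂ ∨ O = O₃) ∧ IsOpen O ∧ z ∈ O := by
      rcases hz with (h | h) | h
      exacts [⟨O₁, Or.inl rfl, h1, h⟩, ⟨O₂, Or.inr (Or.inl rfl), h2, h⟩,
        ⟨O₃, Or.inr (Or.inr rfl), h3, h⟩]
    obtain ⟨O, hmem, hOo, hzO⟩ := this
    obtain ⟨A, B, hA, hB, haA, hbB, hAB⟩ := isOpen_prod_iff.1 hOo z.1 z.2 hzO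
    obtain ⟨g, hg1, hg0⟩ := exists_ctf_pt z.1 A hA haA
    obtain ⟨h, hh1, hh0⟩ := exists_ctf_pt z.2 B hB hbB
    exact ⟨O, hmem, g, h, hg1, hh1, fun w hgw hhw => hAB ⟨hg0 _ hgw, hh0 _ hhw⟩⟩
  choose OO hOO gg hh hg1 hh1 hghO using hch
  have hcov2 : (univ : Set (X × X)) ⊆
      ⋃ z : X × X, {w : X × X | (1:ℝ)/2 < (gg z).1 w.1 ∧ (1:ℝ)/2 < (hh z).1 w.2} := by
    intro w _
    refine mem_iUnion.2 ⟨w, ?_⟩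
    simp only [mem_setOf_eq, hg1 w, hh1 w]
    norm_num
  obtain ⟨t, ht⟩ := IsCompact.elim_finite_subcover (isCompact_univ (X := X × X))
    _ (fun z => IsOpen.and (isOpen_lt continuous_const ((gg z).2.comp continuous_fst))
        (isOpen_lt continuous_const ((hh z).2.comp continuous_snd))) hcov2
  refine ⟨t.image gg ∪ t.image hh, fun z => ?_⟩
  obtain ⟨z₀, hz₀t, hz⟩ := mem_iUnion₂.1 (ht (mem_univ z))
  simp only [mem_setOf_eq] at hz
  have key : ∀ w, eq2 (t.image gg ∪ t.image hh) z w → w ∈ OO z₀ := by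
    intro w hw
    have e1 : (gg z₀).1 z.1 = (gg z₀).1 w.1 :=
      hw.1 _ (Finset.mem_union_left _ (Finset.mem_image_of_mem _ hz₀t))
    have e2 : (hh z₀).1 z.2 = (hh z₀).1 w.2 :=
      hw.2 _ (Finset.mem_union_right _ (Finset.mem_image_of_mem _ hz₀t))
    obtain ⟨hza, hzb⟩ := hz
    simp only [Function.comp_apply] at hza hzb
    apply hghO z₀
    · intro h0; rw [e1, h0] at hza; norm_num at hza
    · intro h0; rw [e2, h0] at hzb; norm_num at hzb
  rcases hOO z₀ with h | h | h
  · exact Or.inl (h ▸ key)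
  · exact Or.inr (Or.inl (h ▸ key))
  · exact Or.inr (Or.inr (h ▸ key))

/-- separating functions for a closed set off the diagonal -/
lemma exists_sep (Z : Set (X × X)) (hZc : IsClosed Z) (hd : ∀ x, (x, x) ∉ Z) :
    ∃ G : Finset (Ctf X), ∀ z ∈ Z, ∃ g ∈ G, g.1 z.1 ≠ g.1 z.2 := by
  classical
  have hch : ∀ z : X × X, z ∈ Z → ∃ g : Ctf X, g.1 z.1 = 0 ∧ g.1 z.2 = 1 := by
    intro z hz
    have hne : z.1 ≠ z.2 := by
      intro h
      exact hd z.1 (by rwa [← Prod.mk.eta (p := z), ← h] at hz)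
    obtain ⟨f, hf0, hf1, -⟩ := exists_continuous_zero_one_of_isClosed
      (X := X) (s := {z.1}) (t := {z.2}) isClosed_singleton isClosed_singleton
      (by rwa [Set.disjoint_singleton])
    exact ⟨⟨f, f.continuous⟩, hf0 rfl, hf1 rfl⟩
  choose! gg hg0 hg1 using hch
  have hcov : Z ⊆ ⋃ z ∈ Z, {w : X × X | (gg z).1 w.1 < 1/3 ∧ 2/3 < (gg z).1 w.2} := by
    intro w hw
    refine mem_iUnion₂.2 ⟨w, hw, ?_⟩
    simp only [mem_setOf_eq, hg0 w hw, hg1 w hw]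
    norm_num
  have hZcomp : IsCompact Z := hZc.isCompact
  obtain ⟨t, htZ, htfin, htsub⟩ := hZcomp.elim_finite_subcover_image
    (fun z _ => IsOpen.and (isOpen_lt ((gg z).2.comp continuous_fst) continuous_const)
      (isOpen_lt continuous_const ((gg z).2.comp continuous_snd))) hcov
  refine ⟨htfin.toFinset.image gg, fun z hz => ?_⟩
  obtain ⟨z₀, hz₀, hzin⟩ := mem_iUnion₂.1 (htsub hz)
  simp only [mem_setOf_eq] at hzin
  refine ⟨gg z₀, Finset.mem_image_of_mem _ (htfin.mem_toFinset.2 hz₀), ?_⟩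
  intro heq
  obtain ⟨ha, hb⟩ := hzin
  simp only [Function.comp_apply] at ha hb
  rw [heq] at ha
  linarith



section KLim
variable {ι : Type*} {α : Type*} {β : Type*} [TopologicalSpace α] [TopologicalSpace β]

/-- ultrafilter limit of a family of sets -/
def KLim (U : Ultrafilter ι) (W : ι → Set α) : Set α :=
  {z | ∀ O : Set α, IsOpen O → z ∈ O → {i | (W i ∩ O).Nonempty} ∈ U}

lemma isClosed_KLim (U : Ultrafilter ι) (W : ι → Set α) : IsClosed (KLim U W) := by
  rw [← isOpen_compl_iff]
  rw [isOpen_iff_forall_mem_open]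
  intro z hz
  simp only [KLim, mem_compl_iff, mem_setOf_eq, not_forall] at hz
  obtain ⟨O, hO, hzO, hnot⟩ := hz
  refine ⟨O, fun z' hz' hmem => ?_, hO, hzO⟩
  exact hnot (hmem O hO hz')

lemma KLim_mono {U : Ultrafilter ι} {W W' : ι → Set α} (h : {i | W i ⊆ W' i} ∈ U) :
    KLim U W ⊆ KLim U W' := by
  intro z hz O hO hzO
  filter_upwards [hz O hO hzO, h] with i ⟨x, hx1, hx2⟩ hi
  exact ⟨x, hi hx1, hx2⟩

lemma KLim_congr {U : Ultrafilter ι} {W W' : ι → Set α} (h : {i | W i = W' i} ∈ U) :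
    KLim U W = KLim U W' := by
  apply Subset.antisymm
  · exact KLim_mono (by filter_upwards [h] with i hi; rw [hi])
  · exact KLim_mono (by filter_upwards [h] with i hi; rw [hi])

lemma KLim_subset_closed {U : Ultrafilter ι} {W : ι → Set α} {E : Set α} (hE : IsClosed E)
    (h : {i | W i ⊆ E} ∈ U) : KLim U W ⊆ E := by
  intro z hz
  by_contra hzE
  have := hz Eᶜ hE.isOpen_compl hzE
  have h2 : ({i | (W i ∩ Eᶜ).Nonempty} ∩ {i | W i ⊆ E}) ∈ U := inter_mem this h
  obtain ⟨i, ⟨x, hx1, hx2⟩, hi⟩ := U.nonempty_of_mem h2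
  exact hx2 (hi hx1)

lemma KLim_univ {U : Ultrafilter ι} {W : ι → Set α} (h : {i | W i = univ} ∈ U) :
    KLim U W = univ := by
  refine eq_univ_of_forall fun z O hO hzO => ?_
  filter_upwards [h] with i hi
  exact ⟨z, by rw [hi]; trivial, hzO⟩

lemma KLim_nonempty [CompactSpace α] {U : Ultrafilter ι} {W : ι → Set α}
    (h : {i | (W i).Nonempty} ∈ U) : (KLim U W).Nonempty := by
  classical
  have hne : Nonempty α := by
    obtain ⟨i, hi⟩ := U.nonempty_of_mem h
    exact ⟨hi.choose⟩
  set zf : ι → α := fun i => if hi : (W i).Nonempty then hi.choose else Classical.arbitrary α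
    with hzf
  obtain ⟨z, -, hz⟩ := (isCompact_univ (X := α)).ultrafilter_le_nhds
    (U.map zf) (by simp)
  refine ⟨z, fun O hO hzO => ?_⟩
  have hO' : O ∈ U.map zf := hz (hO.mem_nhds hzO)
  have : {i | zf i ∈ O} ∈ U := hO'
  filter_upwards [this, h] with i hiO hiW
  refine ⟨zf i, ?_, hiO⟩
  simp only [hzf, dif_pos hiW]
  exact hiW.choose_spec

lemma image_KLim [CompactSpace α] [T2Space β] {U : Ultrafilter ι} (W : ι → Set α)
    (f : α → β) (hf : Continuous f) : f '' KLim U W = KLim U (fun i => f '' W i) := by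
  classical
  apply Subset.antisymm
  · rintro _ ⟨z, hz, rfl⟩ O hO hzO
    filter_upwards [hz (f ⁻¹' O) (hO.preimage hf) hzO] with i ⟨x, hx1, hx2⟩
    exact ⟨f x, mem_image_of_mem f hx1, hx2⟩
  · intro y hy
    by_contra hyim
    -- for each x in the fiber, an open set witnessing x ∉ KLim W
    have hch : ∀ x : α, x ∈ f ⁻¹' {y} → ∃ O : Set α, IsOpen O ∧ x ∈ O ∧
        {i | (W i ∩ O).Nonempty} ∉ U := by
      intro x hx
      have : x ∉ KLim U W := fun hmem => hyim ⟨x, hmem, hx⟩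
      simp only [KLim, mem_setOf_eq, not_forall] at this
      obtain ⟨O, hO, hxO, hOU⟩ := this
      exact ⟨O, hO, hxO, hOU⟩
    choose! OO hOOopen hOOmem hOOU using hch
    have hK : IsCompact (f ⁻¹' {y}) := (isClosed_singleton.preimage hf).isCompact
    obtain ⟨t, ht⟩ := hK.elim_finite_subcover_image
      (fun x hx => hOOopen x hx)
      (fun x hx => mem_biUnion hx (hOOmem x hx))
    obtain ⟨htK, htfin, htsub⟩ := ht
    set V : Set α := ⋃ x ∈ t, OO x with hV
    have hVK : f ⁻¹' {y} ⊆ V := htsub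
    set B : Set β := (f '' Vᶜ)ᶜ with hB
    have hBopen : IsOpen B := by
      rw [hB, isOpen_compl_iff]
      exact ((isClosed_compl_iff.2 (isOpen_biUnion (fun x hx => hOOopen x (htK hx)))).isCompact.image hf).isClosed
    have hyB : y ∈ B := by
      rintro ⟨x', hx', rfl⟩
      exact hx' (hVK rfl)
    have hmem : {i | ((f '' W i) ∩ B).Nonempty} ∈ U := hy B hBopen hyB
    have hsub : {i | ((f '' W i) ∩ B).Nonempty} ⊆ ⋃ x ∈ t, {i | (W i ∩ OO x).Nonempty} := by
      rintro i ⟨_, ⟨x, hxW, rfl⟩, hxB⟩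
      have hxV : x ∈ V := by
        by_contra hxV
        exact hxB (mem_image_of_mem f hxV)
      obtain ⟨x₀, hx₀, hxO⟩ := mem_iUnion₂.1 hxV
      exact mem_iUnion₂.2 ⟨x₀, hx₀, ⟨x, hxW, hxO⟩⟩
    have hnotU : (⋃ x ∈ t, {i | (W i ∩ OO x).Nonempty}) ∉ U := by
      intro hU
      have : ∃ x ∈ t, {i | (W i ∩ OO x).Nonempty} ∈ U := by
        by_contra hcon
        push_neg at hcon
        have hcompl : ∀ x ∈ t, {i | (W i ∩ OO x).Nonempty}ᶜ ∈ U := by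
          intro x hx
          exact Ultrafilter.compl_mem_iff_notMem.2 (hcon x hx)
        have hint : (⋂ x ∈ t, {i | (W i ∩ OO x).Nonempty}ᶜ) ∈ U :=
          (biInter_mem htfin).2 hcompl
        have h2 : ((⋃ x ∈ t, {i | (W i ∩ OO x).Nonempty}) ∩
            (⋂ x ∈ t, {i | (W i ∩ OO x).Nonempty}ᶜ)) ∈ U := inter_mem hU hint
        obtain ⟨i, hi1, hi2⟩ := U.nonempty_of_mem h2
        obtain ⟨x, hx, hix⟩ := mem_iUnion₂.1 hi1
        exact (mem_iInter₂.1 hi2 x hx) hix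
      obtain ⟨x, hx, hxU⟩ := this
      exact hOOU x (htK hx) hxU
    exact hnotU (mem_of_superset hmem hsub)

end KLim






section Saturation

/-- the comparison map to a finite power of ℝ -/
def hmap (G : Finset (Ctf X)) : X → (↥G → ℝ) := fun x g => g.1.1 x

def Satur (G : Finset (Ctf X)) (S : Set (X × X)) : Prop :=
  ∀ z w : X × X, eq2 G z w → z ∈ S → w ∈ S

def NoSatSep (G : Finset (Ctf X)) (W : Set (X × X)) : Prop :=
  ∀ P Q : Set (X × X), IsOpen P → IsOpen Q → Satur G P → Satur G Q →
    W ⊆ P ∪ Q → (W ∩ P).Nonempty → (W ∩ Q).Nonempty → (W ∩ P ∩ Q).Nonempty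

/-- set of points all of whose G-fiber lies in V -/
def fibIn (G : Finset (Ctf X)) (V : Set (X × X)) : Set (X × X) :=
  {z | ∀ w, eq2 G z w → w ∈ V}

lemma eq1_iff_hmap {G : Finset (Ctf X)} {x x' : X} : eq1 G x x' ↔ hmap G x = hmap G x' := by
  constructor
  · intro h; funext g; exact h g.1 g.2
  · intro h g hg; exact congrFun h ⟨g, hg⟩

lemma eq1_symm {G : Finset (Ctf X)} {x x'} (h : eq1 G x x') : eq1 G x' x := by
  rw [eq1_iff_hmap] at h ⊢; exact h.symm

lemma eq1_trans {G : Finset (Ctf X)} {x x' x''} (h : eq1 G x x') (h' : eq1 G x' x'') :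
    eq1 G x x'' := by
  rw [eq1_iff_hmap] at h h' ⊢; exact h.trans h'

lemma continuous_hmap (G : Finset (Ctf X)) : Continuous (hmap G) :=
  continuous_pi fun g => g.1.2

lemma mem_fibIn_self {G : Finset (Ctf X)} {V : Set (X × X)} {z : X × X} (h : z ∈ fibIn G V) :
    z ∈ V := h z ⟨eq1_refl G _, eq1_refl G _⟩

lemma satur_fibIn (G : Finset (Ctf X)) (V : Set (X × X)) : Satur G (fibIn G V) := by
  intro z w hzw hz w' hww'
  exact hz w' ⟨eq1_trans hzw.1 hww'.1, eq1_trans hzw.2 hww'.2⟩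

lemma isOpen_fibIn (G : Finset (Ctf X)) (V : Set (X × X)) (hV : IsOpen V) :
    IsOpen (fibIn G V) := by
  have hH : Continuous (fun z : X × X => (hmap G z.1, hmap G z.2)) :=
    ((continuous_hmap G).comp continuous_fst).prodMk ((continuous_hmap G).comp continuous_snd)
  have hcl : IsClosed ((fun z : X × X => (hmap G z.1, hmap G z.2)) '' Vᶜ) :=
    ((isClosed_compl_iff.2 hV).isCompact.image hH).isClosed
  have : fibIn G V = ((fun z : X × X => (hmap G z.1, hmap G z.2)) ⁻¹' 
      (((fun z : X × X => (hmap G z.1, hmap G z.2)) '' Vᶜ)ᶜ)) := by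
    ext z
    simp only [fibIn, mem_setOf_eq, mem_preimage, mem_compl_iff, mem_image, not_exists]
    constructor
    · intro h w
      rintro ⟨hwV, heq⟩
      have : eq2 G z w := by
        constructor <;> rw [eq1_iff_hmap]
        · exact (congrArg Prod.fst heq).symm
        · exact (congrArg Prod.snd heq).symm
      exact hwV (h w this)
    · intro h w hw
      by_contra hwV
      exact h w ⟨hwV, by
        obtain ⟨h1, h2⟩ := hw
        rw [eq1_iff_hmap] at h1 h2
        exact Prod.ext h1.symm h2.symm⟩
  rw [this]
  exact hcl.isOpen_compl.preimage hH

/-- the "bad witness" predicate -/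
def BadW (R : Set X → Set X → Prop) (G : Finset (Ctf X)) (E : Set (X × X)) : Prop :=
  ∃ W : Set (X × X), W.Nonempty ∧ IsClosed W ∧ Satur G W ∧ NoSatSep G W ∧
    R (Prod.fst '' W) (Prod.snd '' W) ∧ W ⊆ E

end Saturation

section MainLemma

/-- auxiliary: a.e. containment in an open set from containment of the limit -/
lemma ae_subset_open_of_KLim_subset {ι : Type*} {α : Type*} [TopologicalSpace α]
    [CompactSpace α] {U : Ultrafilter ι} {W : ι → Set α} {P : Set α} (hP : IsOpen P)
    (hsub : KLim U W ⊆ P) : {i | W i ⊆ P} ∈ U := by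
  classical
  by_contra hcon
  have hD : {i | (W i \ P).Nonempty} ∈ U := by
    have := Ultrafilter.compl_mem_iff_notMem.2 hcon
    apply mem_of_superset this
    intro i hi
    simp only [mem_compl_iff, mem_setOf_eq, not_subset] at hi
    obtain ⟨x, hx1, hx2⟩ := hi
    exact ⟨x, hx1, hx2⟩
  have hne : Nonempty α := by
    obtain ⟨i, hi⟩ := U.nonempty_of_mem hD
    exact ⟨hi.choose⟩
  set zf : ι → α := fun i => if hi : (W i \ P).Nonempty then hi.choose else Classical.arbitrary α
    with hzf
  obtain ⟨z, -, hz⟩ := (isCompact_univ (X := α)).ultrafilter_le_nhds (U.map zf) (by simp)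
  have hzK : z ∈ KLim U W := by
    intro O hO hzO
    have : {i | zf i ∈ O} ∈ U := hz (hO.mem_nhds hzO)
    filter_upwards [this, hD] with i hiO hiD
    exact ⟨zf i, by simpa [hzf, dif_pos hiD] using (hiD.choose_spec).1, hiO⟩
  have hzP : z ∈ P := hsub hzK
  have : {i | zf i ∈ P} ∈ U := hz (hP.mem_nhds hzP)
  obtain ⟨i, hi1, hi2⟩ := U.nonempty_of_mem (inter_mem this hD)
  have hi2' : (W i \ P).Nonempty := hi2
  have hi1' : zf i ∈ P := hi1
  rw [hzf] at hi1'
  simp only [dif_pos hi2'] at hi1'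
  exact hi2'.choose_spec.2 hi1'

/-- THE MAIN REFLECTION LEMMA -/
lemma main_span (R : Set X → Set X → Prop)
    (hRlim : ∀ (U : Ultrafilter (Finset (Ctf X))) (A B : Finset (Ctf X) → Set X),
      {i | R (A i) (B i)} ∈ U → R (KLim U A) (KLim U B))
    (hPX : ∀ Z : Set (X × X), IsClosed Z → IsConnected Z →
      R (Prod.fst '' Z) (Prod.snd '' Z) → ∃ x, (x, x) ∈ Z)
    (E : Set (X × X)) (hEc : IsClosed E) (hEd : ∀ x, (x, x) ∉ E) :
    ∃ G : Finset (Ctf X), ∀ G' : Finset (Ctf X), G ⊆ G' → ¬ BadW R G' E := by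
  classical
  by_contra hcon
  push_neg at hcon
  -- hcon : ∀ G, ∃ G', G ⊆ G' ∧ BadW R G' E
  set ι := Finset (Ctf X)
  set C : Set ι := {i | BadW R i E} with hC
  -- the filter
  have hFne : (Filter.atTop (α := ι) ⊓ 𝓟 C).NeBot := by
    rw [Filter.inf_principal_neBot_iff]
    intro s hs
    rw [Filter.mem_atTop_sets] at hs
    obtain ⟨a, ha⟩ := hs
    obtain ⟨G', hG'1, hG'2⟩ := hcon a
    exact ⟨G', ha G' hG'1, hG'2⟩
  set U : Ultrafilter ι := @Ultrafilter.of ι _ hFne with hU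
  have hUle : (U : Filter ι) ≤ Filter.atTop ⊓ 𝓟 C := Ultrafilter.of_le _
  have hCU : C ∈ U := hUle (mem_inf_of_right (mem_principal_self C))
  have hIci : ∀ G : ι, {i | G ⊆ i} ∈ U := by
    intro G
    refine hUle (mem_inf_of_left ?_)
    rw [Filter.mem_atTop_sets]
    exact ⟨G, fun b hb => hb⟩
  -- the witnesses
  set W : ι → Set (X × X) := fun i => if h : BadW R i E then h.choose else ∅ with hW
  have hWspec : ∀ i ∈ C, (W i).Nonempty ∧ IsClosed (W i) ∧ Satur i (W i) ∧ NoSatSep i (W i) ∧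
      R (Prod.fst '' (W i)) (Prod.snd '' (W i)) ∧ W i ⊆ E := by
    intro i hi
    have hb : BadW R i E := hi
    simp only [hW]
    rw [dif_pos hb]
    exact hb.choose_spec
  set T : Set (X × X) := KLim U W with hT
  have hTne : T.Nonempty := KLim_nonempty (mem_of_superset hCU (fun i hi => (hWspec i hi).1))
  have hTc : IsClosed T := isClosed_KLim U W
  have hTE : T ⊆ E := KLim_subset_closed hEc (mem_of_superset hCU (fun i hi => (hWspec i hi).2.2.2.2.2))
  have hTR : R (Prod.fst '' T) (Prod.snd '' T) := by
    rw [image_KLim W Prod.fst continuous_fst, image_KLim W Prod.snd continuous_snd]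
    exact hRlim U _ _ (mem_of_superset hCU (fun i hi => (hWspec i hi).2.2.2.2.1))
  -- T is preconnected
  have hTpc : IsPreconnected T := by
    by_contra hnc
    simp only [IsPreconnected, not_forall] at hnc
    obtain ⟨u, v, hu, hv, huv, hTu, hTv, hTuv⟩ := hnc
    rw [Set.not_nonempty_iff_eq_empty] at hTuv
    -- closed pieces
    set A : Set (X × X) := T \ u with hA
    set B : Set (X × X) := T \ v with hB
    have hAc : IsClosed A := hTc.sdiff hu
    have hBc : IsClosed B := hTc.sdiff hv
    have hABdisj : Disjoint A B := by
      rw [Set.disjoint_iff]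
      rintro z ⟨⟨hzT, hzu⟩, _, hzv⟩
      rcases huv hzT with h | h
      exacts [hzu h, hzv h]
    have hABun : A ∪ B = T := by
      apply Subset.antisymm
      · rintro z (⟨h, -⟩ | ⟨h, -⟩) <;> exact h
      · intro z hz
        by_contra hnab
        have h1 : z ∈ u := by
          by_contra hzu
          exact hnab (Or.inl ⟨hz, hzu⟩)
        have h2 : z ∈ v := by
          by_contra hzv
          exact hnab (Or.inr ⟨hz, hzv⟩)
        exact (eq_empty_iff_forall_notMem.1 hTuv z) ⟨hz, h1, h2⟩
    have hAne : A.Nonempty := by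
      rcases eq_empty_or_nonempty A with h | h
      · exfalso
        have hTsubu : T ⊆ u := by
          intro z hz
          by_contra hzu
          exact (eq_empty_iff_forall_notMem.1 h z) ⟨hz, hzu⟩
        obtain ⟨z, hz1, hz2⟩ := hTv
        exact (eq_empty_iff_forall_notMem.1 hTuv z) ⟨hz1, hTsubu hz1, hz2⟩
      · exact h
    have hBne : B.Nonempty := by
      rcases eq_empty_or_nonempty B with h | h
      · exfalso
        have hTsubv : T ⊆ v := by
          intro z hz
          by_contra hzv
          exact (eq_empty_iff_forall_notMem.1 h z) ⟨hz, hzv⟩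
        obtain ⟨z, hz1, hz2⟩ := hTu
        exact (eq_empty_iff_forall_notMem.1 hTuv z) ⟨hz1, hz2, hTsubv hz1⟩
      · exact h
    -- separate
    obtain ⟨OA, OB, hOAo, hOBo, hAOA, hBOB, hOAB⟩ := normal_separation hAc hBc hABdisj
    -- shrink
    obtain ⟨OA', OAc', hOA'o, hOAc'o, hAOA', hOAcsub, hOA'd⟩ :=
      normal_separation hAc (isClosed_compl_iff.2 hOAo)
        (by rw [Set.disjoint_compl_right_iff_subset]; exact hAOA)
    obtain ⟨OB', OBc', hOB'o, hOBc'o, hBOB', hOBcsub, hOB'd⟩ :=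
      normal_separation hBc (isClosed_compl_iff.2 hOBo)
        (by rw [Set.disjoint_compl_right_iff_subset]; exact hBOB)
    have hclA : closure OA' ⊆ OA := by
      have h1 : OA' ⊆ OAc'ᶜ := by
        rw [← Set.disjoint_compl_right_iff_subset, compl_compl]
        exact hOA'd
      have := closure_mono h1
      rw [IsClosed.closure_eq (isClosed_compl_iff.2 hOAc'o)] at this
      intro z hz
      by_contra hzOA
      exact (this hz) (hOAcsub hzOA)
    have hclB : closure OB' ⊆ OB := by
      have h1 : OB' ⊆ OBc'ᶜ := by
        rw [← Set.disjoint_compl_right_iff_subset, compl_compl]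
        exact hOB'd
      have := closure_mono h1
      rw [IsClosed.closure_eq (isClosed_compl_iff.2 hOBc'o)] at this
      intro z hz
      by_contra hzOB
      exact (this hz) (hOBcsub hzOB)
    -- third open set
    set O₃ : Set (X × X) := (closure OA' ∪ closure OB')ᶜ with hO₃
    have hO₃o : IsOpen O₃ := isClosed_closure.union isClosed_closure |>.isOpen_compl
    have hcov3 : OA ∪ OB ∪ O₃ = univ := by
      rw [eq_univ_iff_forall]
      intro z
      by_cases h1 : z ∈ closure OA'
      · exact Or.inl (Or.inl (hclA h1))
      · by_cases h2 : z ∈ closure OB'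
        · exact Or.inl (Or.inr (hclB h2))
        · exact Or.inr (by simp [hO₃, h1, h2])
    obtain ⟨GV, hGV⟩ := exists_fiber_refine3 OA OB O₃ hOAo hOBo hO₃o hcov3
    -- a.e. facts
    have hTsub : T ⊆ OA' ∪ OB' := by
      rw [← hABun]
      rintro z (hz | hz)
      exacts [Or.inl (hAOA' hz), Or.inr (hBOB' hz)]
    have hS1 : {i | W i ⊆ OA' ∪ OB'} ∈ U :=
      ae_subset_open_of_KLim_subset (hOA'o.union hOB'o) hTsub
    obtain ⟨a, haA⟩ := hAne
    have hS2 : {i | (W i ∩ OA').Nonempty} ∈ U := by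
      have haT : a ∈ T := hABun ▸ Or.inl haA
      exact haT OA' hOA'o (hAOA' haA)
    obtain ⟨b, hbB⟩ := hBne
    have hS3 : {i | (W i ∩ OB').Nonempty} ∈ U := by
      have hbT : b ∈ T := hABun ▸ Or.inr hbB
      exact hbT OB' hOB'o (hBOB' hbB)
    obtain ⟨i, hi⟩ := U.nonempty_of_mem
      (inter_mem (inter_mem (inter_mem (inter_mem hS1 hS2) hS3) (hIci GV)) hCU)
    obtain ⟨⟨⟨⟨hiS1, hiS2⟩, hiS3⟩, hiGV⟩, hiC⟩ := hi
    obtain ⟨hWne, hWc, hWsat, hWnss, hWR, hWE⟩ := hWspec i hiC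
    -- apply NoSatSep
    have hdisjAB : Disjoint OA OB := hOAB
    have key := hWnss (fibIn i OA) (fibIn i OB) (isOpen_fibIn i OA hOAo)
      (isOpen_fibIn i OB hOBo) (satur_fibIn i OA) (satur_fibIn i OB)
      (by
        intro z hz
        rcases hGV z with h | h | h
        · exact Or.inl (fun w hw => h w ⟨eq1_mono hiGV hw.1, eq1_mono hiGV hw.2⟩)
        · exact Or.inr (fun w hw => h w ⟨eq1_mono hiGV hw.1, eq1_mono hiGV hw.2⟩)
        · exfalso
          have hzO₃ : z ∈ O₃ := h z ⟨eq1_refl _ _, eq1_refl _ _⟩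
          rcases hiS1 hz with hz' | hz'
          · exact hzO₃ (Or.inl (subset_closure hz'))
          · exact hzO₃ (Or.inr (subset_closure hz')))
      (by
        obtain ⟨z, hz1, hz2⟩ := hiS2
        refine ⟨z, hz1, ?_⟩
        rcases (by
          rcases hGV z with h | h | h
          · exact Or.inl (fun w hw => h w ⟨eq1_mono hiGV hw.1, eq1_mono hiGV hw.2⟩)
          · exact Or.inr (fun w hw => h w ⟨eq1_mono hiGV hw.1, eq1_mono hiGV hw.2⟩)
          · exfalso
            exact (h z ⟨eq1_refl _ _, eq1_refl _ _⟩) (Or.inl (subset_closure hz2)) :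
            z ∈ fibIn i OA ∨ z ∈ fibIn i OB) with h | h
        · exact h
        · exfalso
          have hzOB : z ∈ OB := mem_fibIn_self h
          have hzOA : z ∈ OA := hclA (subset_closure hz2)
          exact (Set.disjoint_left.1 hdisjAB) hzOA hzOB)
      (by
        obtain ⟨z, hz1, hz2⟩ := hiS3
        refine ⟨z, hz1, ?_⟩
        rcases (by
          rcases hGV z with h | h | h
          · exact Or.inl (fun w hw => h w ⟨eq1_mono hiGV hw.1, eq1_mono hiGV hw.2⟩)
          · exact Or.inr (fun w hw => h w ⟨eq1_mono hiGV hw.1, eq1_mono hiGV hw.2⟩)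
          · exfalso
            exact (h z ⟨eq1_refl _ _, eq1_refl _ _⟩) (Or.inr (subset_closure hz2)) :
            z ∈ fibIn i OA ∨ z ∈ fibIn i OB) with h | h
        · exfalso
          have : z ∈ OA := mem_fibIn_self h
          exact (Set.disjoint_left.1 hdisjAB) this (hclB (subset_closure hz2))
        · exact h)
    obtain ⟨z, ⟨-, hzP⟩, hzQ⟩ := key
    exact (Set.disjoint_left.1 hdisjAB) (mem_fibIn_self hzP) (mem_fibIn_self hzQ)
  -- contradiction with hPX
  obtain ⟨x, hx⟩ := hPX T hTc ⟨hTne, hTpc⟩ hTR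
  exact hEd x (hTE hx)

end MainLemma

section Patterns
variable {X : Type*} [TopologicalSpace X] [CompactSpace X] [T2Space X]
attribute [local instance] Classical.propDecidable

abbrev SPat := List (ℕ × (ℚ × ℚ) × (ℚ × ℚ))
abbrev CBox := List (ℕ × ℚ × ℚ)
abbrev CPat := List CBox

/-- closed box -/
def sBox (l : List (Ctf X)) (e : ℕ × (ℚ × ℚ) × (ℚ × ℚ)) : Set (X × X) :=
  {z | (l.getD e.1 default).1 z.1 ∈ Icc (e.2.1.1 : ℝ) (e.2.1.2 : ℝ) ∧
       (l.getD e.1 default).1 z.2 ∈ Icc (e.2.2.1 : ℝ) (e.2.2.2 : ℝ)}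

lemma mem_sBox_iff {l : List (Ctf X)} {e} {z : X × X} :
    z ∈ sBox l e ↔ ((l.getD e.1 default).1 z.1 ∈ Icc (e.2.1.1 : ℝ) (e.2.1.2 : ℝ) ∧
       (l.getD e.1 default).1 z.2 ∈ Icc (e.2.2.1 : ℝ) (e.2.2.2 : ℝ)) := Iff.rfl

def sInterp (l : List (Ctf X)) : SPat → Set (X × X)
  | [] => ∅
  | e :: p => sBox l e ∪ sInterp l p

lemma isClosed_sBox (l : List (Ctf X)) (e) : IsClosed (sBox l e) := by
  apply IsClosed.inter
  · exact (isClosed_Icc).preimage ((l.getD e.1 default).2.comp continuous_fst)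
  · exact (isClosed_Icc).preimage ((l.getD e.1 default).2.comp continuous_snd)

lemma isClosed_sInterp (l : List (Ctf X)) (p : SPat) : IsClosed (sInterp l p) := by
  induction p with
  | nil => exact isClosed_empty
  | cons e p ih => exact (isClosed_sBox l e).union ih

lemma mem_sInterp_iff {l : List (Ctf X)} {p : SPat} {z : X × X} :
    z ∈ sInterp l p ↔ ∃ e ∈ p, z ∈ sBox l e := by
  induction p with
  | nil => simp [sInterp]
  | cons e p ih => simp [sInterp, ih, or_and_right, exists_or]

lemma sBox_congr {l l' : List (Ctf X)} {e} (h : l.getD e.1 default = l'.getD e.1 default) :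
    sBox l e = sBox l' e := by
  unfold sBox; rw [h]

lemma sInterp_congr {l l' : List (Ctf X)} {p : SPat}
    (h : ∀ e ∈ p, l.getD e.1 default = l'.getD e.1 default) :
    sInterp l p = sInterp l' p := by
  induction p with
  | nil => rfl
  | cons e p ih =>
    unfold sInterp
    rw [sBox_congr (h e (List.mem_cons_self)), ih (fun e' he' => h e' (List.mem_cons_of_mem e he'))]

/-- open box in X -/
def cInterpBox (l : List (Ctf X)) : CBox → Set X
  | [] => univ
  | e :: b => {x | (l.getD e.1 default).1 x ∈ Ioo (e.2.1 : ℝ) (e.2.2 : ℝ)} ∩ cInterpBox l b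

lemma isOpen_cInterpBox (l : List (Ctf X)) (b : CBox) : IsOpen (cInterpBox l b) := by
  induction b with
  | nil => exact isOpen_univ
  | cons e b ih => exact ((isOpen_Ioo).preimage (l.getD e.1 default).2).inter ih

lemma mem_cInterpBox_iff {l : List (Ctf X)} {b : CBox} {x : X} :
    x ∈ cInterpBox l b ↔ ∀ e ∈ b, (l.getD e.1 default).1 x ∈ Ioo (e.2.1 : ℝ) (e.2.2 : ℝ) := by
  induction b with
  | nil => simp [cInterpBox]
  | cons e b ih =>
    simp only [cInterpBox, mem_inter_iff, mem_setOf_eq, ih, List.mem_cons]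
    constructor
    · rintro ⟨h1, h2⟩ e' (rfl | he')
      exacts [h1, h2 e' he']
    · intro h
      exact ⟨h e (Or.inl rfl), fun e' he' => h e' (Or.inr he')⟩

lemma cInterpBox_congr {l l' : List (Ctf X)} {b : CBox}
    (h : ∀ e ∈ b, l.getD e.1 default = l'.getD e.1 default) :
    cInterpBox l b = cInterpBox l' b := by
  induction b with
  | nil => rfl
  | cons e b ih =>
    unfold cInterpBox
    rw [h e (List.mem_cons_self), ih (fun e' he' => h e' (List.mem_cons_of_mem e he'))]

-- the four relations
def Rsp : Set X → Set X → Prop := fun A B => A = B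
def Rss : Set X → Set X → Prop := fun A B => A ⊆ B
def Rj : Set X → Set X → Prop := fun A B => A = univ ∧ B = univ
def Rjs : Set X → Set X → Prop := fun A B => B = univ

noncomputable def spanGp (R : Set X → Set X → Prop) (p : SPat) (l : List (Ctf X)) :
    Finset (Ctf X) :=
  if h : ∃ G : Finset (Ctf X), ∀ G' : Finset (Ctf X), G ⊆ G' → ¬ BadW R G' (sInterp l p)
  then h.choose else ∅

lemma spanGp_spec {R : Set X → Set X → Prop} {p : SPat} {l : List (Ctf X)}
    (h : ∃ G : Finset (Ctf X), ∀ G' : Finset (Ctf X), G ⊆ G' → ¬ BadW R G' (sInterp l p)) :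
    ∀ G' : Finset (Ctf X), spanGp R p l ⊆ G' → ¬ BadW R G' (sInterp l p) := by
  rw [spanGp, dif_pos h]
  exact h.choose_spec

def ChainSpec (c : CPat) (l : List (Ctf X)) (G : Finset (Ctf X)) : Prop :=
  ∃ (n : ℕ) (V : Fin n → Set X) (bx : Fin n → CBox),
    (∀ i, IsOpen (V i)) ∧ (⋃ i, V i) = univ ∧
    (∀ i, bx i ∈ c ∧ V i ⊆ cInterpBox l (bx i)) ∧
    (∀ i j : Fin n, (V i ∩ V j).Nonempty ↔ |((i : ℕ) : ℤ) - ((j : ℕ) : ℤ)| ≤ 1) ∧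
    (∀ x, ∃ i, ∀ x', eq1 G x x' → x' ∈ V i) ∧
    (∀ i : ℕ, ∀ hi : i + 1 < n, ∃ x₀, ∀ x', eq1 G x₀ x' →
        x' ∈ V ⟨i, Nat.lt_of_succ_lt hi⟩ ∩ V ⟨i + 1, hi⟩)

noncomputable def chainG (c : CPat) (l : List (Ctf X)) : Finset (Ctf X) :=
  if h : ∃ G, ChainSpec c l G then h.choose else ∅

lemma chainG_spec {c : CPat} {l : List (Ctf X)} (h : ∃ G, ChainSpec c l G) :
    ChainSpec c l (chainG c l) := by
  rw [chainG, dif_pos h]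
  exact h.choose_spec

def SeedChainSpec (G : Finset (Ctf X)) : Prop :=
  ∃ U : Finset (Set X), (∀ u ∈ U, IsOpen u) ∧ ⋃₀ (U : Set (Set X)) = univ ∧
    ¬ (∃ (n : ℕ) (V : Fin n → Set X), (∀ i, IsOpen (V i)) ∧ (⋃ i, V i) = univ ∧
        (∀ i, ∃ u ∈ U, V i ⊆ u) ∧
        ∀ i j : Fin n, (V i ∩ V j).Nonempty ↔ |((i : ℕ) : ℤ) - ((j : ℕ) : ℤ)| ≤ 1) ∧
    (∀ x, ∃ u ∈ U, ∀ x', eq1 G x x' → x' ∈ u)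

noncomputable def seedChain (X : Type*) [TopologicalSpace X] [CompactSpace X] [T2Space X] :
    Finset (Ctf X) :=
  if h : ∃ G, SeedChainSpec G then h.choose else ∅

lemma seedChain_spec (h : ∃ G : Finset (Ctf X), SeedChainSpec G) :
    SeedChainSpec (seedChain X) := by
  rw [seedChain, dif_pos h]
  exact h.choose_spec

def SeedSpanSpec (R : Set X → Set X → Prop) (G : Finset (Ctf X)) : Prop :=
  ∃ Z : Set (X × X), IsClosed Z ∧ IsConnected Z ∧ R (Prod.fst '' Z) (Prod.snd '' Z) ∧
    (∀ x, (x, x) ∉ Z) ∧ ∀ z ∈ Z, ∃ g ∈ G, g.1 z.1 ≠ g.1 z.2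

noncomputable def seedSpan (R : Set X → Set X → Prop) : Finset (Ctf X) :=
  if h : ∃ G, SeedSpanSpec R G then h.choose else ∅

lemma seedSpan_spec {R : Set X → Set X → Prop} (h : ∃ G, SeedSpanSpec R G) :
    SeedSpanSpec R (seedSpan R) := by
  rw [seedSpan, dif_pos h]
  exact h.choose_spec

noncomputable def spanPart (j : ℕ) (l : List (Ctf X)) : List (Ctf X) :=
  match (Encodable.decode (α := SPat) j) with
  | some p => (spanGp Rsp p l).toList ++ (spanGp Rss p l).toList ++
      (spanGp Rj p l).toList ++ (spanGp Rjs p l).toList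
  | none => []

noncomputable def chainPart (j : ℕ) (l : List (Ctf X)) : List (Ctf X) :=
  match (Encodable.decode (α := CPat) j) with
  | some c => (chainG c l).toList
  | none => []

noncomputable def step (l : List (Ctf X)) (k : ℕ) : List (Ctf X) :=
  default :: (List.range (k + 1)).flatMap (fun j => spanPart j l ++ chainPart j l)

noncomputable def LL (X : Type*) [TopologicalSpace X] [CompactSpace X] [T2Space X] :
    ℕ → List (Ctf X)
  | 0 => default :: ((seedChain X).toList ++ (seedSpan Rsp).toList ++ (seedSpan Rss).toList ++
      (seedSpan Rj).toList ++ (seedSpan Rjs).toList)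
  | (k + 1) => LL X k ++ step (LL X k) k

noncomputable def ff (X : Type*) [TopologicalSpace X] [CompactSpace X] [T2Space X] (n : ℕ) :
    Ctf X := (LL X (n + 1)).getD n default

lemma LL_prefix {k m : ℕ} (h : k ≤ m) : LL X k <+: LL X m := by
  induction m with
  | zero =>
    rw [Nat.le_zero.1 h]
  | succ m ih =>
    rcases Nat.lt_or_ge k (m + 1) with h' | h'
    · exact (ih (Nat.lt_succ_iff.1 h')).trans (by rw [LL]; exact List.prefix_append _ _)
    · rw [Nat.le_antisymm h h']

lemma LL_length (k : ℕ) : k ≤ (LL X k).length := by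
  induction k with
  | zero => exact Nat.zero_le _
  | succ k ih =>
    rw [LL]
    rw [List.length_append]
    have : 1 ≤ (step (LL X k) k).length := by
      rw [step, List.length_cons]
      exact Nat.succ_le_succ (Nat.zero_le _)
    omega

lemma getD_of_prefix {α : Type*} [Inhabited α] {l₁ l₂ : List α} (h : l₁ <+: l₂) {n : ℕ}
    (hn : n < l₁.length) : l₂.getD n default = l₁.getD n default := by
  obtain ⟨t, rfl⟩ := h
  rw [List.getD_append _ _ _ _ hn]

lemma ff_eq {k n : ℕ} (h : n < (LL X k).length) : ff X n = (LL X k).getD n default := by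
  rw [ff]
  rcases le_or_gt k (n + 1) with h' | h'
  · exact getD_of_prefix (LL_prefix h') h
  · have h2 : n < (LL X (n + 1)).length := Nat.lt_of_lt_of_le (Nat.lt_succ_self n) (LL_length _)
    exact (getD_of_prefix (LL_prefix (le_of_lt h')) h2).symm

lemma mem_LL_ff {g : Ctf X} {k : ℕ} (h : g ∈ LL X k) : ∃ n, ff X n = g := by
  obtain ⟨j, hj, hget⟩ := List.mem_iff_getElem.1 h
  refine ⟨j, ?_⟩
  rw [ff_eq hj, List.getD_eq_getElem _ _ hj]
  exact hget

lemma step_sub_LL {k : ℕ} {g : Ctf X} (h : g ∈ step (LL X k) k) : g ∈ LL X (k + 1) := by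
  rw [LL]
  exact List.mem_append_right _ h

lemma part_sub_step {j k : ℕ} {l : List (Ctf X)} (hj : j ≤ k) {g : Ctf X}
    (h : g ∈ spanPart j l ++ chainPart j l) : g ∈ step l k := by
  rw [step]
  refine List.mem_cons_of_mem _ (List.mem_flatMap.2 ⟨j, ?_, h⟩)
  rw [List.mem_range]
  omega

lemma spanGp_range {R : Set X → Set X → Prop} (hR : R = Rsp ∨ R = Rss ∨ R = Rj ∨ R = Rjs)
    {p : SPat} {k : ℕ} (hk : Encodable.encode p ≤ k) {g : Ctf X}
    (hg : g ∈ spanGp R p (LL X k)) : ∃ n, ff X n = g := by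
  apply mem_LL_ff (k := k + 1)
  apply step_sub_LL
  apply part_sub_step hk
  apply List.mem_append_left
  rw [spanPart, Encodable.encodek p]
  have hmem : g ∈ (spanGp R p (LL X k)).toList := Finset.mem_toList.2 hg
  rcases hR with rfl | rfl | rfl | rfl
  · exact List.mem_append_left _ (List.mem_append_left _ (List.mem_append_left _ hmem))
  · exact List.mem_append_left _ (List.mem_append_left _ (List.mem_append_right _ hmem))
  · exact List.mem_append_left _ (List.mem_append_right _ hmem)
  · exact List.mem_append_right _ hmem

lemma chainG_range {c : CPat} {k : ℕ} (hk : Encodable.encode c ≤ k) {g : Ctf X}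
    (hg : g ∈ chainG c (LL X k)) : ∃ n, ff X n = g := by
  apply mem_LL_ff (k := k + 1)
  apply step_sub_LL
  apply part_sub_step hk
  apply List.mem_append_right
  rw [chainPart, Encodable.encodek c]
  exact Finset.mem_toList.2 hg

lemma seedChain_range {g : Ctf X} (hg : g ∈ seedChain X) : ∃ n, ff X n = g := by
  apply mem_LL_ff (k := 0)
  rw [LL]
  exact List.mem_cons_of_mem _ (List.mem_append_left _ (List.mem_append_left _
    (List.mem_append_left _ (List.mem_append_left _ (Finset.mem_toList.2 hg)))))

lemma seedSpan_range {R : Set X → Set X → Prop} (hR : R = Rsp ∨ R = Rss ∨ R = Rj ∨ R = Rjs)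
    {g : Ctf X} (hg : g ∈ seedSpan R) : ∃ n, ff X n = g := by
  apply mem_LL_ff (k := 0)
  rw [LL]
  apply List.mem_cons_of_mem
  have hmem : g ∈ (seedSpan R).toList := Finset.mem_toList.2 hg
  rcases hR with rfl | rfl | rfl | rfl
  · exact List.mem_append_left _ (List.mem_append_left _ (List.mem_append_left _
      (List.mem_append_right _ hmem)))
  · exact List.mem_append_left _ (List.mem_append_left _ (List.mem_append_right _ hmem))
  · exact List.mem_append_left _ (List.mem_append_right _ hmem)
  · exact List.mem_append_right _ hmem

lemma ff_range_iff (l : List (Ctf X)) {k : ℕ} (hlen : ∀ e : ℕ, e < k → e < (LL X k).length) :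
    True := trivial

-- interp stability at final stage
lemma sInterp_LL_eq {p : SPat} {k : ℕ} (hidx : ∀ e ∈ p, e.1 < k) (m : ℕ) (hm : k ≤ m) :
    sInterp (LL X m) p = sInterp (LL X k) p := by
  apply sInterp_congr
  intro e he
  have h1 : e.1 < (LL X k).length := Nat.lt_of_lt_of_le (hidx e he) (LL_length k)
  exact (getD_of_prefix (LL_prefix hm) h1)

lemma cInterpBox_LL_eq {b : CBox} {k : ℕ} (hidx : ∀ e ∈ b, e.1 < k) (m : ℕ) (hm : k ≤ m) :
    cInterpBox (LL X m) b = cInterpBox (LL X k) b := by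
  apply cInterpBox_congr
  intro e he
  have h1 : e.1 < (LL X k).length := Nat.lt_of_lt_of_le (hidx e he) (LL_length k)
  exact (getD_of_prefix (LL_prefix hm) h1)

-- interpretation via ff
lemma getD_LL_ff {k n : ℕ} (h : n < k) : (LL X k).getD n default = ff X n :=
  (ff_eq (Nat.lt_of_lt_of_le h (LL_length k))).symm

end Patterns

section FinalTool
variable {X : Type*} [TopologicalSpace X] [CompactSpace X] [T2Space X]
attribute [local instance] Classical.propDecidable

noncomputable def qmap (X : Type*) [TopologicalSpace X] [CompactSpace X] [T2Space X] :
    X → (ℕ → ℝ) := fun x n => (ff X n).1 x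

lemma continuous_qmap : Continuous (qmap X) := continuous_pi fun n => (ff X n).2

noncomputable def pairmap (X : Type*) [TopologicalSpace X] [CompactSpace X] [T2Space X] :
    X × X → (ℕ → ℝ) × (ℕ → ℝ) := fun z => (qmap X z.1, qmap X z.2)

lemma continuous_pairmap : Continuous (pairmap X) :=
  ((continuous_qmap).comp continuous_fst).prodMk ((continuous_qmap).comp continuous_snd)

noncomputable def Yset (X : Type*) [TopologicalSpace X] [CompactSpace X] [T2Space X] : Set (ℕ → ℝ) :=
  Set.range (qmap X)

lemma isCompact_Yset : IsCompact (Yset X) := isCompact_range continuous_qmap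

lemma range_pairmap : Set.range (pairmap X) = (Yset X) ×ˢ (Yset X) := by
  ext v
  constructor
  · rintro ⟨z, rfl⟩
    exact ⟨⟨z.1, rfl⟩, ⟨z.2, rfl⟩⟩
  · rintro ⟨⟨a, ha⟩, ⟨b, hb⟩⟩
    exact ⟨(a, b), Prod.ext ha hb⟩

/-- the saturation of a set -/
def satSet (G : Finset (Ctf X)) (W : Set (X × X)) : Set (X × X) := {z | ∃ w ∈ W, eq2 G z w}

lemma subset_satSet {G : Finset (Ctf X)} {W : Set (X × X)} : W ⊆ satSet G W :=
  fun z hz => ⟨z, hz, ⟨eq1_refl _ _, eq1_refl _ _⟩⟩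

lemma satSet_antitone {G G' : Finset (Ctf X)} (h : G ⊆ G') {W : Set (X × X)} :
    satSet G' W ⊆ satSet G W := by
  rintro z ⟨w, hw, h1, h2⟩
  exact ⟨w, hw, eq1_mono h h1, eq1_mono h h2⟩

def H2 (G : Finset (Ctf X)) : X × X → ((↥G → ℝ) × (↥G → ℝ)) :=
  fun z => (hmap G z.1, hmap G z.2)

lemma continuous_H2 (G : Finset (Ctf X)) : Continuous (H2 G) :=
  ((continuous_hmap G).comp continuous_fst).prodMk ((continuous_hmap G).comp continuous_snd)

lemma eq2_iff_H2 {G : Finset (Ctf X)} {z w : X × X} : eq2 G z w ↔ H2 G z = H2 G w := by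
  rw [eq2, eq1_iff_hmap, eq1_iff_hmap, Prod.ext_iff]
  rfl

lemma satSet_eq_preimage (G : Finset (Ctf X)) (W : Set (X × X)) :
    satSet G W = H2 G ⁻¹' (H2 G '' W) := by
  ext z
  simp only [satSet, mem_setOf_eq, mem_preimage, mem_image]
  constructor
  · rintro ⟨w, hw, hzw⟩
    exact ⟨w, hw, (eq2_iff_H2.1 hzw).symm⟩
  · rintro ⟨w, hw, hzw⟩
    exact ⟨w, hw, eq2_iff_H2.2 hzw.symm⟩

lemma isClosed_satSet {G : Finset (Ctf X)} {W : Set (X × X)} (hW : IsClosed W) :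
    IsClosed (satSet G W) := by
  rw [satSet_eq_preimage]
  exact (IsClosed.preimage (continuous_H2 G)
    ((hW.isCompact.image (continuous_H2 G)).isClosed))

lemma satur_satSet (G : Finset (Ctf X)) (W : Set (X × X)) : Satur G (satSet G W) := by
  rintro z w hzw ⟨w₀, hw₀, hz⟩
  refine ⟨w₀, hw₀, ?_⟩
  rw [eq2_iff_H2] at hzw hz ⊢
  rw [← hzw, hz]

lemma image_H2_satSet (G : Finset (Ctf X)) (W : Set (X × X)) :
    H2 G '' (satSet G W) = H2 G '' W := by
  apply Subset.antisymm
  · rintro _ ⟨z, ⟨w, hw, hzw⟩, rfl⟩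
    exact ⟨w, hw, (eq2_iff_H2.1 hzw).symm⟩
  · exact image_mono subset_satSet

lemma noSatSep_satSet {G : Finset (Ctf X)} {W : Set (X × X)} (hW : IsClosed W)
    (hS : IsPreconnected (H2 G '' W)) : NoSatSep G (satSet G W) := by
  intro P Q hPo hQo hPs hQs hcov hne1 hne2
  set W' := satSet G W with hW'
  set S := H2 G '' W' with hSdef
  have hSW : S = H2 G '' W := by rw [hSdef, image_H2_satSet]
  have hSpc : IsPreconnected S := by rw [hSW]; exact hS
  set P₀ : Set ((↥G → ℝ) × (↥G → ℝ)) := (H2 G '' Pᶜ)ᶜ with hP₀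
  set Q₀ : Set ((↥G → ℝ) × (↥G → ℝ)) := (H2 G '' Qᶜ)ᶜ with hQ₀
  have hP₀o : IsOpen P₀ :=
    ((isClosed_compl_iff.2 hPo).isCompact.image (continuous_H2 G)).isClosed.isOpen_compl
  have hQ₀o : IsOpen Q₀ :=
    ((isClosed_compl_iff.2 hQo).isCompact.image (continuous_H2 G)).isClosed.isOpen_compl
  have claim : ∀ w ∈ W', (w ∈ P ↔ H2 G w ∈ P₀) ∧ (w ∈ Q ↔ H2 G w ∈ Q₀) := by
    intro w _
    constructor
    · constructor
      · intro hwP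
        rintro ⟨w', hw', heq⟩
        exact hw' (hPs w w' (eq2_iff_H2.2 heq.symm) hwP)
      · intro hmem
        by_contra hwP
        exact hmem ⟨w, hwP, rfl⟩
    · constructor
      · intro hwQ
        rintro ⟨w', hw', heq⟩
        exact hw' (hQs w w' (eq2_iff_H2.2 heq.symm) hwQ)
      · intro hmem
        by_contra hwQ
        exact hmem ⟨w, hwQ, rfl⟩
  have h1 : S ⊆ P₀ ∪ Q₀ := by
    rintro _ ⟨w, hw, rfl⟩
    rcases hcov hw with h | h
    · exact Or.inl (((claim w hw).1).1 h)
    · exact Or.inr (((claim w hw).2).1 h)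
  have h2 : (S ∩ P₀).Nonempty := by
    obtain ⟨w, hw1, hw2⟩ := hne1
    exact ⟨H2 G w, ⟨w, hw1, rfl⟩, ((claim w hw1).1).1 hw2⟩
  have h3 : (S ∩ Q₀).Nonempty := by
    obtain ⟨w, hw1, hw2⟩ := hne2
    exact ⟨H2 G w, ⟨w, hw1, rfl⟩, ((claim w hw1).2).1 hw2⟩
  obtain ⟨y, hyS, hyP, hyQ⟩ := hSpc P₀ Q₀ hP₀o hQ₀o h1 h2 h3
  obtain ⟨w, hw, rfl⟩ := hyS
  exact ⟨w, ⟨hw, ((claim w hw).1).2 hyP⟩, ((claim w hw).2).2 hyQ⟩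

/-- agreement of a point with a vector through all functions of G -/
def agr (G : Finset (Ctf X)) (a : X) (v : ℕ → ℝ) : Prop :=
  ∀ g ∈ G, ∀ n : ℕ, ff X n = g → g.1 a = v n

lemma agr_qmap {G : Finset (Ctf X)} (hGr : ∀ g ∈ G, ∃ n, ff X n = g) {a x : X} :
    agr G a (qmap X x) ↔ eq1 G a x := by
  constructor
  · intro h g hg
    obtain ⟨n, hn⟩ := hGr g hg
    have := h g hg n hn
    rw [this, ← hn]
    rfl
  · intro h g hg n hn
    rw [h g hg, ← hn]
    rfl

lemma fst_satSet_char {G : Finset (Ctf X)} (hGr : ∀ g ∈ G, ∃ n, ff X n = g)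
    {Z' : Set ((ℕ → ℝ) × (ℕ → ℝ))} (hZsub : Z' ⊆ (Yset X) ×ˢ (Yset X)) :
    Prod.fst '' satSet G (pairmap X ⁻¹' Z') = {a : X | ∃ z' ∈ Z', agr G a z'.1} := by
  ext a
  simp only [mem_image, mem_setOf_eq]
  constructor
  · rintro ⟨z, ⟨w, hw, hzw⟩, rfl⟩
    refine ⟨pairmap X w, hw, ?_⟩
    rw [show (pairmap X w).1 = qmap X w.1 from rfl, agr_qmap hGr]
    exact hzw.1
  · rintro ⟨z', hz', hagr⟩
    obtain ⟨⟨x₁, hx₁⟩, ⟨x₂, hx₂⟩⟩ := hZsub hz'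
    refine ⟨(a, x₂), ⟨(x₁, x₂), ?_, ?_, eq1_refl _ _⟩, rfl⟩
    · show pairmap X (x₁, x₂) ∈ Z'
      have : pairmap X (x₁, x₂) = z' := Prod.ext hx₁ hx₂
      rwa [this]
    · rw [← hx₁] at hagr
      exact (agr_qmap hGr).1 hagr

lemma snd_satSet_char {G : Finset (Ctf X)} (hGr : ∀ g ∈ G, ∃ n, ff X n = g)
    {Z' : Set ((ℕ → ℝ) × (ℕ → ℝ))} (hZsub : Z' ⊆ (Yset X) ×ˢ (Yset X)) :
    Prod.snd '' satSet G (pairmap X ⁻¹' Z') = {b : X | ∃ z' ∈ Z', agr G b z'.2} := by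
  ext b
  simp only [mem_image, mem_setOf_eq]
  constructor
  · rintro ⟨z, ⟨w, hw, hzw⟩, rfl⟩
    refine ⟨pairmap X w, hw, ?_⟩
    rw [show (pairmap X w).2 = qmap X w.2 from rfl, agr_qmap hGr]
    exact hzw.2
  · rintro ⟨z', hz', hagr⟩
    obtain ⟨⟨x₁, hx₁⟩, ⟨x₂, hx₂⟩⟩ := hZsub hz'
    refine ⟨(x₁, b), ⟨(x₁, x₂), ?_, eq1_refl _ _, ?_⟩, rfl⟩
    · show pairmap X (x₁, x₂) ∈ Z'
      have : pairmap X (x₁, x₂) = z' := Prod.ext hx₁ hx₂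
      rwa [this]
    · rw [← hx₂] at hagr
      exact (agr_qmap hGr).1 hagr

end FinalTool

section Core
variable {X : Type*} [TopologicalSpace X] [CompactSpace X] [T2Space X]
attribute [local instance] Classical.propDecidable

lemma span_pos_core (R : Set X → Set X → Prop)
    (hR4 : R = Rsp ∨ R = Rss ∨ R = Rj ∨ R = Rjs)
    (hRlim : ∀ (U : Ultrafilter (Finset (Ctf X))) (A B : Finset (Ctf X) → Set X),
      {i | R (A i) (B i)} ∈ U → R (KLim U A) (KLim U B))
    (hPX : ∀ Z : Set (X × X), IsClosed Z → IsConnected Z →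
      R (Prod.fst '' Z) (Prod.snd '' Z) → ∃ x, (x, x) ∈ Z)
    (Z' : Set ((ℕ → ℝ) × (ℕ → ℝ)))
    (hZc : IsClosed Z') (hZne : Z'.Nonempty) (hZpc : IsPreconnected Z')
    (hZsub : Z' ⊆ (Yset X) ×ˢ (Yset X))
    (hZdiag : ∀ v, (v, v) ∉ Z')
    (hRtrans : ∀ (G : Finset (Ctf X)), (∀ g ∈ G, ∃ n, ff X n = g) →
      R (Prod.fst '' satSet G (pairmap X ⁻¹' Z'))
        (Prod.snd '' satSet G (pairmap X ⁻¹' Z'))) :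
    False := by
  classical
  set W : Set (X × X) := pairmap X ⁻¹' Z' with hWdef
  have hWc : IsClosed W := hZc.preimage continuous_pairmap
  -- the approximate diagonals
  set D : ℕ → Set (X × X) := fun m => ⋂ n ∈ Finset.range m,
    {z : X × X | (ff X n).1 z.1 = (ff X n).1 z.2} with hDdef
  have hDc : ∀ m, IsClosed (D m) := fun m => isClosed_biInter (fun n _ =>
    isClosed_eq ((ff X n).2.comp continuous_fst) ((ff X n).2.comp continuous_snd))
  have hDmono : ∀ m, W ∩ D (m + 1) ⊆ W ∩ D m := by
    intro m
    apply inter_subset_inter_right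
    intro z hz
    apply mem_iInter₂.2
    intro n hn
    exact mem_iInter₂.1 hz n (by rw [Finset.mem_range] at hn ⊢; omega)
  have hkill : ∀ z, z ∈ (⋂ m, (W ∩ D m)) → False := by
    intro z hz
    have hW : z ∈ W := (mem_iInter.1 hz 0).1
    have hq : qmap X z.1 = qmap X z.2 := by
      funext n
      have := (mem_iInter.1 hz (n + 1)).2
      have h2 := mem_iInter₂.1 this n (Finset.mem_range.2 (Nat.lt_succ_self n))
      exact h2
    have : pairmap X z ∈ Z' := hW
    rw [show pairmap X z = (qmap X z.1, qmap X z.2) from rfl, hq] at this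
    exact hZdiag _ this
  have hm : ∃ m, W ∩ D m = ∅ := by
    by_contra hcon
    push_neg at hcon
    have := IsCompact.nonempty_iInter_of_sequence_nonempty_isCompact_isClosed
      (fun m => W ∩ D m) hDmono (fun m => hcon m)
      (hWc.inter (hDc 0)).isCompact (fun m => hWc.inter (hDc m))
    obtain ⟨z, hz⟩ := this
    exact hkill z hz
  obtain ⟨m, hmE⟩ := hm
  -- the m-level saturation
  set Fm : Finset (Ctf X) := Finset.image (ff X) (Finset.range m) with hFm
  set K : Set (X × X) := satSet Fm W with hKdef
  have hKc : IsClosed K := isClosed_satSet hWc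
  have hKsep : ∀ z ∈ K, ∃ n, n < m ∧ (ff X n).1 z.1 ≠ (ff X n).1 z.2 := by
    rintro z ⟨w, hw, hzw⟩
    by_contra hcon
    push_neg at hcon
    have hwD : w ∈ D m := by
      apply mem_iInter₂.2
      intro n hn
      rw [Finset.mem_range] at hn
      have hffn : ff X n ∈ Fm := Finset.mem_image_of_mem _ (Finset.mem_range.2 hn)
      have e1 : (ff X n).1 z.1 = (ff X n).1 w.1 := hzw.1 _ hffn
      have e2 : (ff X n).1 z.2 = (ff X n).1 w.2 := hzw.2 _ hffn
      show (ff X n).1 w.1 = (ff X n).1 w.2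
      rw [← e1, ← e2]
      exact hcon n hn
    rw [eq_empty_iff_forall_notMem] at hmE
    exact hmE w ⟨hw, hwD⟩
  -- boxes
  have hbox : ∀ z ∈ K, ∃ e : ℕ × (ℚ × ℚ) × (ℚ × ℚ), e.1 < m ∧
      ((ff X e.1).1 z.1 ∈ Ioo (e.2.1.1 : ℝ) (e.2.1.2 : ℝ) ∧
        (ff X e.1).1 z.2 ∈ Ioo (e.2.2.1 : ℝ) (e.2.2.2 : ℝ)) ∧
      ((e.2.1.2 : ℝ) < (e.2.2.1 : ℝ) ∨ (e.2.2.2 : ℝ) < (e.2.1.1 : ℝ)) := by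
    intro z hz
    obtain ⟨n, hn, hne⟩ := hKsep z hz
    set a : ℝ := (ff X n).1 z.1 with ha
    set b : ℝ := (ff X n).1 z.2 with hb
    rcases lt_or_gt_of_ne hne with hab | hab
    · obtain ⟨u, hu1, hu2⟩ := exists_rat_btwn hab
      obtain ⟨p, hp1, hp2⟩ := exists_rat_btwn (show a - 1 < a by linarith)
      obtain ⟨q, hq1, hq2⟩ := exists_rat_btwn hu1
      obtain ⟨r, hr1, hr2⟩ := exists_rat_btwn hu2
      obtain ⟨s', hs1, hs2⟩ := exists_rat_btwn (show b < b + 1 by linarith)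
      refine ⟨(n, (p, q), (r, s')), hn, ⟨⟨hp2, hq1⟩, ⟨hr2, hs1⟩⟩, Or.inl ?_⟩
      calc (q : ℝ) < u := hq2
        _ < r := hr1
    · obtain ⟨u, hu1, hu2⟩ := exists_rat_btwn hab
      obtain ⟨r, hr1, hr2⟩ := exists_rat_btwn (show b - 1 < b by linarith)
      obtain ⟨s', hs1, hs2⟩ := exists_rat_btwn hu1
      obtain ⟨p, hp1, hp2⟩ := exists_rat_btwn hu2
      obtain ⟨q, hq1, hq2⟩ := exists_rat_btwn (show a < a + 1 by linarith)
      refine ⟨(n, (p, q), (r, s')), hn, ⟨⟨hp2, hq1⟩, ⟨hr2, hs1⟩⟩, Or.inr ?_⟩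
      calc (s' : ℝ) < u := hs2
        _ < p := hp1
  choose! ee hee1 hee2 hee3 using hbox
  -- open boxes cover K
  set oBox : (ℕ × (ℚ × ℚ) × (ℚ × ℚ)) → Set (X × X) := fun e =>
    {w : X × X | (ff X e.1).1 w.1 ∈ Ioo (e.2.1.1 : ℝ) (e.2.1.2 : ℝ) ∧
      (ff X e.1).1 w.2 ∈ Ioo (e.2.2.1 : ℝ) (e.2.2.2 : ℝ)} with hoBox
  have hoBoxOpen : ∀ e, IsOpen (oBox e) := by
    intro e
    apply IsOpen.inter
    · exact isOpen_Ioo.preimage ((ff X e.1).2.comp continuous_fst)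
    · exact isOpen_Ioo.preimage ((ff X e.1).2.comp continuous_snd)
  obtain ⟨t, htK, htfin, htsub⟩ := hKc.isCompact.elim_finite_subcover_image
    (fun z (_ : z ∈ K) => hoBoxOpen (ee z))
    (fun z hz => mem_biUnion hz (hee2 z hz))
  -- the pattern
  set plist : SPat := htfin.toFinset.toList.map ee with hplist
  have hmem_plist : ∀ e, e ∈ plist ↔ ∃ z₀ ∈ t, ee z₀ = e := by
    intro e
    rw [hplist, List.mem_map]
    constructor
    · rintro ⟨z₀, hz₀, rfl⟩
      exact ⟨z₀, htfin.mem_toFinset.1 (Finset.mem_toList.1 hz₀), rfl⟩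
    · rintro ⟨z₀, hz₀, rfl⟩
      exact ⟨z₀, Finset.mem_toList.2 (htfin.mem_toFinset.2 hz₀), rfl⟩
  set k : ℕ := max (Encodable.encode plist) m with hk
  have hgetD : ∀ e ∈ plist, (LL X k).getD e.1 default = ff X e.1 := by
    intro e he
    obtain ⟨z₀, hz₀, rfl⟩ := (hmem_plist e).1 he
    exact getD_LL_ff (Nat.lt_of_lt_of_le (hee1 z₀ (htK hz₀)) (le_max_right _ _))
  set E : Set (X × X) := sInterp (LL X k) plist with hE
  have hEc : IsClosed E := isClosed_sInterp _ _
  have hKE : K ⊆ E := by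
    intro z hz
    obtain ⟨z₀, hz₀t, hzO⟩ := mem_iUnion₂.1 (htsub hz)
    have he : ee z₀ ∈ plist := (hmem_plist _).2 ⟨z₀, hz₀t, rfl⟩
    apply mem_sInterp_iff.2
    refine ⟨ee z₀, he, ?_⟩
    rw [mem_sBox_iff, hgetD _ he]
    obtain ⟨h1, h2⟩ := hzO
    exact ⟨Ioo_subset_Icc_self h1, Ioo_subset_Icc_self h2⟩
  have hEd : ∀ x, (x, x) ∉ E := by
    intro x hx
    obtain ⟨e, he, hmem⟩ := mem_sInterp_iff.1 hx
    rw [mem_sBox_iff, hgetD _ he] at hmem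
    obtain ⟨⟨h1a, h1b⟩, ⟨h2a, h2b⟩⟩ := hmem
    obtain ⟨z₀, hz₀, rfl⟩ := (hmem_plist e).1 he
    rcases hee3 z₀ (htK hz₀) with h | h
    · simp only at h1a h1b h2a h2b
      linarith
    · simp only at h1a h1b h2a h2b
      linarith
  -- the main lemma applies
  have hex : ∃ G : Finset (Ctf X), ∀ G' : Finset (Ctf X), G ⊆ G' →
      ¬ BadW R G' (sInterp (LL X k) plist) :=
    main_span R hRlim hPX _ hEc hEd
  have hspec := spanGp_spec hex
  set G₀ : Finset (Ctf X) := spanGp R plist (LL X k) with hG₀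
  have hGr₀ : ∀ g ∈ G₀, ∃ n, ff X n = g := by
    intro g hg
    exact spanGp_range hR4 (le_max_left _ _) hg
  set F' : Finset (Ctf X) := G₀ ∪ Fm with hF'
  have hGr : ∀ g ∈ F', ∃ n, ff X n = g := by
    intro g hg
    rcases Finset.mem_union.1 hg with h | h
    · exact hGr₀ g h
    · obtain ⟨n, _, rfl⟩ := Finset.mem_image.1 h
      exact ⟨n, rfl⟩
  -- the bad witness
  set W' : Set (X × X) := satSet F' W with hW'def
  have hW'ne : W'.Nonempty := by
    obtain ⟨z', hz'⟩ := hZne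
    obtain ⟨⟨x₁, hx₁⟩, ⟨x₂, hx₂⟩⟩ := hZsub hz'
    refine ⟨(x₁, x₂), subset_satSet ?_⟩
    show pairmap X (x₁, x₂) ∈ Z'
    rw [show pairmap X (x₁, x₂) = z' from Prod.ext hx₁ hx₂]
    exact hz'
  have hW'c : IsClosed W' := isClosed_satSet hWc
  have hW'sat : Satur F' W' := satur_satSet _ _
  -- connectivity of the H2-image
  have hnn : ∀ g : ↥F', ∃ n, ff X n = g.1 := fun g => hGr g.1 g.2
  choose nn hnn' using hnn
  set prm : (ℕ → ℝ) × (ℕ → ℝ) → ((↥F' → ℝ) × (↥F' → ℝ)) :=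
    fun v => (fun g => v.1 (nn g), fun g => v.2 (nn g)) with hprm
  have hprmc : Continuous prm := by
    apply Continuous.prodMk
    · exact continuous_pi fun g => (continuous_apply (nn g)).comp continuous_fst
    · exact continuous_pi fun g => (continuous_apply (nn g)).comp continuous_snd
  have hcomp : ∀ z : X × X, H2 F' z = prm (pairmap X z) := by
    intro z
    apply Prod.ext
    · funext g
      show g.1.1 z.1 = qmap X z.1 (nn g)
      rw [show qmap X z.1 (nn g) = (ff X (nn g)).1 z.1 from rfl, hnn' g]
    · funext g
      show g.1.1 z.2 = qmap X z.2 (nn g)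
      rw [show qmap X z.2 (nn g) = (ff X (nn g)).1 z.2 from rfl, hnn' g]
  have himg : H2 F' '' W = prm '' Z' := by
    have h1 : H2 F' '' W = prm '' (pairmap X '' W) := by
      rw [← image_comp]
      apply image_congr
      intro z _
      exact hcomp z
    rw [h1]
    congr 1
    rw [hWdef, Set.image_preimage_eq_inter_range, range_pairmap, inter_eq_left.2 hZsub]
  have hW'nss : NoSatSep F' W' := by
    apply noSatSep_satSet hWc
    rw [himg]
    exact hZpc.image prm hprmc.continuousOn
  have hW'R : R (Prod.fst '' W') (Prod.snd '' W') := hRtrans F' hGr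
  have hW'E : W' ⊆ E := by
    have h1 : W' ⊆ K := by
      rw [hW'def, hKdef]
      apply satSet_antitone
      rw [hF']
      exact Finset.subset_union_right
    exact h1.trans hKE
  exact hspec F' Finset.subset_union_left ⟨W', hW'ne, hW'c, hW'sat, hW'nss, hW'R, hW'E⟩

end Core

section Wrap
variable {X : Type*} [TopologicalSpace X] [CompactSpace X] [T2Space X]
attribute [local instance] Classical.propDecidable

noncomputable def qq (X : Type*) [TopologicalSpace X] [CompactSpace X] [T2Space X] :
    X → ↥(Yset X) := fun x => ⟨qmap X x, ⟨x, rfl⟩⟩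

lemma continuous_qq : Continuous (qq X) := continuous_qmap.subtype_mk _

lemma surjective_qq : Function.Surjective (qq X) := by
  rintro ⟨v, x, hx⟩
  exact ⟨x, Subtype.ext hx⟩

instance compactYset : CompactSpace ↥(Yset X) :=
  isCompact_iff_compactSpace.1 isCompact_Yset

noncomputable def emb2 (X : Type*) [TopologicalSpace X] [CompactSpace X] [T2Space X] :
    ↥(Yset X) × ↥(Yset X) → (ℕ → ℝ) × (ℕ → ℝ) := fun z => (z.1.1, z.2.1)

lemma continuous_emb2 : Continuous (emb2 X) :=
  (continuous_subtype_val.comp continuous_fst).prodMk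
    (continuous_subtype_val.comp continuous_snd)

lemma convert_Z (Z'' : Set (↥(Yset X) × ↥(Yset X))) (hc : IsClosed Z'')
    (hconn : IsConnected Z'') (hno : ∀ y, (y, y) ∉ Z'') :
    IsClosed (emb2 X '' Z'') ∧ (emb2 X '' Z'').Nonempty ∧ IsPreconnected (emb2 X '' Z'') ∧
      (emb2 X '' Z'') ⊆ (Yset X) ×ˢ (Yset X) ∧ (∀ v, (v, v) ∉ (emb2 X '' Z'')) ∧
      Prod.fst '' (emb2 X '' Z'') = Subtype.val '' (Prod.fst '' Z'') ∧
      Prod.snd '' (emb2 X '' Z'') = Subtype.val '' (Prod.snd '' Z'') := by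
  refine ⟨(hc.isCompact.image continuous_emb2).isClosed, hconn.nonempty.image _,
    hconn.isPreconnected.image _ continuous_emb2.continuousOn, ?_, ?_, ?_, ?_⟩
  · rintro _ ⟨z, hz, rfl⟩
    exact ⟨z.1.2, z.2.2⟩
  · rintro v ⟨z, hz, hzv⟩
    have h1 : z.1.1 = v := congrArg Prod.fst hzv
    have h2 : z.2.1 = v := congrArg Prod.snd hzv
    have : z.1 = z.2 := Subtype.ext (h1.trans h2.symm)
    apply hno z.1
    rw [show (z.1, z.1) = z from Prod.ext rfl this]
    exact hz
  · rw [← image_comp, ← image_comp]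
    rfl
  · rw [← image_comp, ← image_comp]
    rfl

lemma agr_set_mono {Z' : Set ((ℕ → ℝ) × (ℕ → ℝ))}
    (h : Prod.fst '' Z' ⊆ Prod.snd '' Z') (G : Finset (Ctf X)) :
    {a : X | ∃ z' ∈ Z', agr G a z'.1} ⊆ {b : X | ∃ z' ∈ Z', agr G b z'.2} := by
  rintro a ⟨z', hz', hagr⟩
  obtain ⟨z'', hz'', h2⟩ := h ⟨z', hz', rfl⟩
  exact ⟨z'', hz'', by rw [h2]; exact hagr⟩

lemma agr_set_mono' {Z' : Set ((ℕ → ℝ) × (ℕ → ℝ))}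
    (h : Prod.snd '' Z' ⊆ Prod.fst '' Z') (G : Finset (Ctf X)) :
    {b : X | ∃ z' ∈ Z', agr G b z'.2} ⊆ {a : X | ∃ z' ∈ Z', agr G a z'.1} := by
  rintro b ⟨z', hz', hagr⟩
  obtain ⟨z'', hz'', h2⟩ := h ⟨z', hz', rfl⟩
  exact ⟨z'', hz'', by rw [h2]; exact hagr⟩

lemma agr_set_univ_snd {Z' : Set ((ℕ → ℝ) × (ℕ → ℝ))} (h : Prod.snd '' Z' = Yset X)
    {G : Finset (Ctf X)} (hGr : ∀ g ∈ G, ∃ n, ff X n = g) :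
    {b : X | ∃ z' ∈ Z', agr G b z'.2} = univ := by
  refine eq_univ_of_forall fun b => ?_
  have hb : qmap X b ∈ Yset X := ⟨b, rfl⟩
  rw [← h] at hb
  obtain ⟨z', hz', h2⟩ := hb
  exact ⟨z', hz', by rw [h2]; exact (agr_qmap hGr).2 (eq1_refl _ _)⟩

lemma agr_set_univ_fst {Z' : Set ((ℕ → ℝ) × (ℕ → ℝ))} (h : Prod.fst '' Z' = Yset X)
    {G : Finset (Ctf X)} (hGr : ∀ g ∈ G, ∃ n, ff X n = g) :
    {a : X | ∃ z' ∈ Z', agr G a z'.1} = univ := by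
  refine eq_univ_of_forall fun a => ?_
  have hb : qmap X a ∈ Yset X := ⟨a, rfl⟩
  rw [← h] at hb
  obtain ⟨z', hz', h2⟩ := hb
  exact ⟨z', hz', by rw [h2]; exact (agr_qmap hGr).2 (eq1_refl _ _)⟩

lemma val_image_univ : Subtype.val '' (univ : Set ↥(Yset X)) = Yset X := by
  rw [image_univ, Subtype.range_coe]

-- ==== positive directions ====

lemma spanZero_Y_of_X (h : SpanZero X) : SpanZero (↥(Yset X)) := by
  intro Z'' hc hconn hR
  by_contra hno
  push_neg at hno
  obtain ⟨h1, h2, h3, h4, h5, hfst, hsnd⟩ := convert_Z Z'' hc hconn hno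
  have hAB : Prod.fst '' (emb2 X '' Z'') = Prod.snd '' (emb2 X '' Z'') := by
    rw [hfst, hsnd, hR]
  refine span_pos_core Rsp (Or.inl rfl) ?_ ?_ (emb2 X '' Z'') h1 h2 h3 h4 h5 ?_
  · intro U A B hU
    exact KLim_congr hU
  · intro Z hc' hconn' hR'
    exact h Z hc' hconn' hR'
  · intro G hGr
    rw [show (Rsp : Set X → Set X → Prop) = fun A B => A = B from rfl]
    rw [fst_satSet_char hGr h4, snd_satSet_char hGr h4]
    exact Subset.antisymm (agr_set_mono (le_of_eq hAB) G) (agr_set_mono' (le_of_eq hAB.symm) G)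

lemma semispanZero_Y_of_X (h : SemispanZero X) : SemispanZero (↥(Yset X)) := by
  intro Z'' hc hconn hR
  by_contra hno
  push_neg at hno
  obtain ⟨h1, h2, h3, h4, h5, hfst, hsnd⟩ := convert_Z Z'' hc hconn hno
  have hAB : Prod.fst '' (emb2 X '' Z'') ⊆ Prod.snd '' (emb2 X '' Z'') := by
    rw [hfst, hsnd]
    exact image_mono hR
  refine span_pos_core Rss (Or.inr (Or.inl rfl)) ?_ ?_ (emb2 X '' Z'') h1 h2 h3 h4 h5 ?_
  · intro U A B hU
    exact KLim_mono hU
  · intro Z hc' hconn' hR'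
    exact h Z hc' hconn' hR'
  · intro G hGr
    rw [show (Rss : Set X → Set X → Prop) = fun A B => A ⊆ B from rfl]
    rw [fst_satSet_char hGr h4, snd_satSet_char hGr h4]
    exact agr_set_mono hAB G

lemma surjSpanZero_Y_of_X (h : SurjectiveSpanZero X) : SurjectiveSpanZero (↥(Yset X)) := by
  intro Z'' hc hconn hR1 hR2
  by_contra hno
  push_neg at hno
  obtain ⟨h1, h2, h3, h4, h5, hfst, hsnd⟩ := convert_Z Z'' hc hconn hno
  have hA : Prod.fst '' (emb2 X '' Z'') = Yset X := by
    rw [hfst, hR1, val_image_univ]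
  have hB : Prod.snd '' (emb2 X '' Z'') = Yset X := by
    rw [hsnd, hR2, val_image_univ]
  refine span_pos_core Rj (Or.inr (Or.inr (Or.inl rfl))) ?_ ?_ (emb2 X '' Z'') h1 h2 h3 h4 h5 ?_
  · intro U A B hU
    constructor
    · exact KLim_univ (mem_of_superset hU (fun i hi => hi.1))
    · exact KLim_univ (mem_of_superset hU (fun i hi => hi.2))
  · intro Z hc' hconn' hR'
    exact h Z hc' hconn' hR'.1 hR'.2
  · intro G hGr
    constructor
    · rw [fst_satSet_char hGr h4]
      exact agr_set_univ_fst hA hGr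
    · rw [snd_satSet_char hGr h4]
      exact agr_set_univ_snd hB hGr

lemma surjSemispanZero_Y_of_X (h : SurjectiveSemispanZero X) :
    SurjectiveSemispanZero (↥(Yset X)) := by
  intro Z'' hc hconn hR2
  by_contra hno
  push_neg at hno
  obtain ⟨h1, h2, h3, h4, h5, hfst, hsnd⟩ := convert_Z Z'' hc hconn hno
  have hB : Prod.snd '' (emb2 X '' Z'') = Yset X := by
    rw [hsnd, hR2, val_image_univ]
  refine span_pos_core Rjs (Or.inr (Or.inr (Or.inr rfl))) ?_ ?_ (emb2 X '' Z'') h1 h2 h3 h4 h5 ?_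
  · intro U A B hU
    exact KLim_univ hU
  · intro Z hc' hconn' hR'
    exact h Z hc' hconn' hR'
  · intro G hGr
    rw [show (Rjs : Set X → Set X → Prop) = fun A B => B = univ from rfl]
    rw [snd_satSet_char hGr h4]
    exact agr_set_univ_snd hB hGr

-- ==== negative directions ====

end Wrap

section Neg
variable {X : Type*} [TopologicalSpace X] [CompactSpace X] [T2Space X]
attribute [local instance] Classical.propDecidable

noncomputable def qq2 (X : Type*) [TopologicalSpace X] [CompactSpace X] [T2Space X] :
    X × X → ↥(Yset X) × ↥(Yset X) := fun z => (qq X z.1, qq X z.2)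

lemma continuous_qq2 : Continuous (qq2 X) :=
  (continuous_qq.comp continuous_fst).prodMk (continuous_qq.comp continuous_snd)

lemma neg_push {G : Finset (Ctf X)} (Z : Set (X × X)) (hZc : IsClosed Z)
    (hZconn : IsConnected Z)
    (hsep : ∀ z ∈ Z, ∃ g ∈ G, g.1 z.1 ≠ g.1 z.2) (hGr : ∀ g ∈ G, ∃ n, ff X n = g) :
    IsClosed (qq2 X '' Z) ∧ IsConnected (qq2 X '' Z) ∧
    Prod.fst '' (qq2 X '' Z) = qq X '' (Prod.fst '' Z) ∧
    Prod.snd '' (qq2 X '' Z) = qq X '' (Prod.snd '' Z) ∧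
    ∀ y, (y, y) ∉ (qq2 X '' Z) := by
  refine ⟨(hZc.isCompact.image continuous_qq2).isClosed, hZconn.image _
    continuous_qq2.continuousOn, ?_, ?_, ?_⟩
  · rw [← image_comp, ← image_comp]
    rfl
  · rw [← image_comp, ← image_comp]
    rfl
  · rintro y ⟨z, hz, hzy⟩
    have h1 : qq X z.1 = y := congrArg Prod.fst hzy
    have h2 : qq X z.2 = y := congrArg Prod.snd hzy
    have hq : qmap X z.1 = qmap X z.2 := by
      have := h1.trans h2.symm
      exact congrArg Subtype.val this
    obtain ⟨g, hg, hne⟩ := hsep z hz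
    obtain ⟨n, rfl⟩ := hGr g hg
    exact hne (congrFun hq n)

lemma spanZero_X_of_Y (h : SpanZero (↥(Yset X))) : SpanZero X := by
  by_contra hX
  rw [SpanZero] at hX
  push_neg at hX
  obtain ⟨Z, hZc, hZconn, hZR, hZd⟩ := hX
  obtain ⟨G0, hG0⟩ := exists_sep Z hZc hZd
  have hseed : ∃ G, SeedSpanSpec (X := X) Rsp G := ⟨G0, Z, hZc, hZconn, hZR, hZd, hG0⟩
  obtain ⟨Z₁, h1c, h1conn, h1R, h1d, h1sep⟩ := seedSpan_spec hseed
  have hGr : ∀ g ∈ seedSpan (X := X) Rsp, ∃ n, ff X n = g :=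
    fun g hg => seedSpan_range (Or.inl rfl) hg
  obtain ⟨hc'', hconn'', hfst, hsnd, hnd⟩ := neg_push Z₁ h1c h1conn h1sep hGr
  obtain ⟨y, hy⟩ := h _ hc'' hconn'' (by rw [hfst, hsnd, show Prod.fst '' Z₁ = Prod.snd '' Z₁ from h1R])
  exact hnd y hy

lemma semispanZero_X_of_Y (h : SemispanZero (↥(Yset X))) : SemispanZero X := by
  by_contra hX
  rw [SemispanZero] at hX
  push_neg at hX
  obtain ⟨Z, hZc, hZconn, hZR, hZd⟩ := hX
  obtain ⟨G0, hG0⟩ := exists_sep Z hZc hZd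
  have hseed : ∃ G, SeedSpanSpec (X := X) Rss G := ⟨G0, Z, hZc, hZconn, hZR, hZd, hG0⟩
  obtain ⟨Z₁, h1c, h1conn, h1R, h1d, h1sep⟩ := seedSpan_spec hseed
  have hGr : ∀ g ∈ seedSpan (X := X) Rss, ∃ n, ff X n = g :=
    fun g hg => seedSpan_range (Or.inr (Or.inl rfl)) hg
  obtain ⟨hc'', hconn'', hfst, hsnd, hnd⟩ := neg_push Z₁ h1c h1conn h1sep hGr
  obtain ⟨y, hy⟩ := h _ hc'' hconn''
    (by rw [hfst, hsnd]; exact image_mono (show Prod.fst '' Z₁ ⊆ Prod.snd '' Z₁ from h1R))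
  exact hnd y hy

lemma surjSpanZero_X_of_Y (h : SurjectiveSpanZero (↥(Yset X))) : SurjectiveSpanZero X := by
  by_contra hX
  rw [SurjectiveSpanZero] at hX
  push_neg at hX
  obtain ⟨Z, hZc, hZconn, hZR1, hZR2, hZd⟩ := hX
  obtain ⟨G0, hG0⟩ := exists_sep Z hZc hZd
  have hseed : ∃ G, SeedSpanSpec (X := X) Rj G := ⟨G0, Z, hZc, hZconn, ⟨hZR1, hZR2⟩, hZd, hG0⟩
  obtain ⟨Z₁, h1c, h1conn, h1R, h1d, h1sep⟩ := seedSpan_spec hseed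
  have hGr : ∀ g ∈ seedSpan (X := X) Rj, ∃ n, ff X n = g :=
    fun g hg => seedSpan_range (Or.inr (Or.inr (Or.inl rfl))) hg
  obtain ⟨hc'', hconn'', hfst, hsnd, hnd⟩ := neg_push Z₁ h1c h1conn h1sep hGr
  obtain ⟨y, hy⟩ := h _ hc'' hconn''
    (by rw [hfst, (h1R : _ ∧ _).1, image_univ, Set.range_eq_univ]; exact surjective_qq)
    (by rw [hsnd, (h1R : _ ∧ _).2, image_univ, Set.range_eq_univ]; exact surjective_qq)
  exact hnd y hy

lemma surjSemispanZero_X_of_Y (h : SurjectiveSemispanZero (↥(Yset X))) :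
    SurjectiveSemispanZero X := by
  by_contra hX
  rw [SurjectiveSemispanZero] at hX
  push_neg at hX
  obtain ⟨Z, hZc, hZconn, hZR, hZd⟩ := hX
  obtain ⟨G0, hG0⟩ := exists_sep Z hZc hZd
  have hseed : ∃ G, SeedSpanSpec (X := X) Rjs G := ⟨G0, Z, hZc, hZconn, hZR, hZd, hG0⟩
  obtain ⟨Z₁, h1c, h1conn, h1R, h1d, h1sep⟩ := seedSpan_spec hseed
  have hGr : ∀ g ∈ seedSpan (X := X) Rjs, ∃ n, ff X n = g :=
    fun g hg => seedSpan_range (Or.inr (Or.inr (Or.inr rfl))) hg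
  obtain ⟨hc'', hconn'', hfst, hsnd, hnd⟩ := neg_push Z₁ h1c h1conn h1sep hGr
  obtain ⟨y, hy⟩ := h _ hc'' hconn''
    (by rw [hsnd, (h1R : Prod.snd '' Z₁ = univ), image_univ, Set.range_eq_univ]; exact surjective_qq)
  exact hnd y hy

end Neg

section Chain
variable {X : Type*} [TopologicalSpace X] [CompactSpace X] [T2Space X]
attribute [local instance] Classical.propDecidable

def vBox : CBox → Set (ℕ → ℝ)
  | [] => univ
  | e :: b => {v : ℕ → ℝ | v e.1 ∈ Ioo (e.2.1 : ℝ) (e.2.2 : ℝ)} ∩ vBox b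

lemma isOpen_vBox (b : CBox) : IsOpen (vBox b) := by
  induction b with
  | nil => exact isOpen_univ
  | cons e b ih => exact (isOpen_Ioo.preimage (continuous_apply e.1)).inter ih

lemma mem_vBox_iff {b : CBox} {v : ℕ → ℝ} :
    v ∈ vBox b ↔ ∀ e ∈ b, v e.1 ∈ Ioo (e.2.1 : ℝ) (e.2.2 : ℝ) := by
  induction b with
  | nil => simp [vBox]
  | cons e b ih =>
    simp only [vBox, mem_inter_iff, mem_setOf_eq, ih, List.mem_cons]
    constructor
    · rintro ⟨h1, h2⟩ e' (rfl | he')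
      exacts [h1, h2 e' he']
    · intro h
      exact ⟨h e (Or.inl rfl), fun e' he' => h e' (Or.inr he')⟩

/-- bridge between the X-side and ambient-side interpretations -/
lemma mem_cInterpBox_vBox {b : CBox} {k : ℕ} (hidx : ∀ e ∈ b, e.1 < k) (x : X) :
    x ∈ cInterpBox (LL X k) b ↔ qmap X x ∈ vBox b := by
  rw [mem_cInterpBox_iff, mem_vBox_iff]
  apply forall_congr'
  intro e
  apply imp_congr_right
  intro he
  rw [getD_LL_ff (hidx e he)]
  rfl

def cpatBound (c : CPat) : ℕ := ((c.flatMap id).map (fun e => e.1 + 1)).foldr max 0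

lemma le_foldr_max {l : List ℕ} {x : ℕ} (h : x ∈ l) : x ≤ l.foldr max 0 := by
  induction l with
  | nil => cases h
  | cons a l ih =>
    rcases List.mem_cons.1 h with rfl | h'
    · exact le_max_left _ _
    · exact le_trans (ih h') (le_max_right _ _)

lemma lt_cpatBound {c : CPat} {b : CBox} {e : ℕ × ℚ × ℚ} (hb : b ∈ c) (he : e ∈ b) :
    e.1 < cpatBound c := by
  have : e.1 + 1 ∈ ((c.flatMap id).map (fun e => e.1 + 1)) :=
    List.mem_map.2 ⟨e, List.mem_flatMap.2 ⟨b, hb, he⟩, rfl⟩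
  exact Nat.lt_of_lt_of_le (Nat.lt_succ_self _) (le_foldr_max this)

/-- the open pushforward of an open set of X to the quotient -/
noncomputable def pushO (u : Set X) : Set ↥(Yset X) := {y | ∀ x, qmap X x = y.1 → x ∈ u}

lemma isOpen_pushO {u : Set X} (hu : IsOpen u) : IsOpen (pushO (X := X) u) := by
  have heq : pushO (X := X) u = Subtype.val ⁻¹' ((qmap X '' uᶜ)ᶜ) := by
    ext y
    simp only [pushO, mem_setOf_eq, mem_preimage, mem_compl_iff, mem_image, not_exists]
    constructor
    · intro h x
      rintro ⟨hxu, hxy⟩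
      exact hxu (h x hxy)
    · intro h x hxy
      by_contra hxu
      exact h x ⟨hxu, hxy⟩
  rw [heq]
  apply IsOpen.preimage continuous_subtype_val
  rw [isOpen_compl_iff]
  exact (((isClosed_compl_iff.2 hu).isCompact).image continuous_qmap).isClosed

lemma pull_pushO {u : Set X} : qq X ⁻¹' (pushO (X := X) u) ⊆ u := by
  intro x hx
  exact hx x rfl

lemma eq1_of_qmap {G : Finset (Ctf X)} (hGr : ∀ g ∈ G, ∃ n, ff X n = g) {x x' : X}
    (h : qmap X x = qmap X x') : eq1 G x x' := by
  intro g hg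
  obtain ⟨n, rfl⟩ := hGr g hg
  exact congrFun h n

lemma mem_pushO_of_fiber {u : Set X} {G : Finset (Ctf X)} (hGr : ∀ g ∈ G, ∃ n, ff X n = g)
    {x₀ : X} (hfib : ∀ x', eq1 G x₀ x' → x' ∈ u) : qq X x₀ ∈ pushO (X := X) u := by
  intro x hx
  exact hfib x (eq1_of_qmap hGr hx.symm)

lemma chain_exists (hch : Chainable X) (c : CPat) (l : List (Ctf X))
    (hcov : ∀ x : X, ∃ b ∈ c, x ∈ cInterpBox l b) :
    ∃ G, ChainSpec c l G := by
  classical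
  set U : Finset (Set X) := Finset.image (cInterpBox l) c.toFinset with hU
  have hUo : ∀ u ∈ U, IsOpen u := by
    rintro u hu
    obtain ⟨b, hb, rfl⟩ := Finset.mem_image.1 hu
    exact isOpen_cInterpBox l b
  have hUc : ⋃₀ (U : Set (Set X)) = univ := by
    apply eq_univ_of_forall
    intro x
    obtain ⟨b, hb, hx⟩ := hcov x
    exact ⟨cInterpBox l b,
      by
        rw [hU]
        push_cast
        exact mem_image_of_mem _ (by simpa using List.mem_toFinset.2 hb), hx⟩
  obtain ⟨n, V, hVo, hVu, hVr, hVp⟩ := hch U hUo hUc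
  have hbx : ∀ i : Fin n, ∃ b ∈ c, V i ⊆ cInterpBox l b := by
    intro i
    obtain ⟨u, hu, hVi⟩ := hVr i
    obtain ⟨b, hb, rfl⟩ := Finset.mem_image.1 hu
    exact ⟨b, List.mem_toFinset.1 hb, hVi⟩
  choose bx hbx1 hbx2 using hbx
  have hUV : ∀ u ∈ Finset.image V Finset.univ, IsOpen u := by
    rintro u hu
    obtain ⟨i, -, rfl⟩ := Finset.mem_image.1 hu
    exact hVo i
  have hUVc : ⋃₀ ((Finset.image V Finset.univ : Finset (Set X)) : Set (Set X)) = univ := by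
    apply eq_univ_of_forall
    intro x
    have : x ∈ ⋃ i, V i := by rw [hVu]; trivial
    obtain ⟨i, hi⟩ := mem_iUnion.1 this
    exact ⟨V i, Finset.mem_coe.2 (Finset.mem_image_of_mem _ (Finset.mem_univ i)), hi⟩
  obtain ⟨G₁, hG₁⟩ := exists_fiber_refine _ hUV hUVc
  have hpt : ∀ i : ℕ, ∃ D : Finset (Ctf X), ∀ hi : i + 1 < n, ∃ x₀ : X, ∀ x', eq1 D x₀ x' →
      x' ∈ V ⟨i, Nat.lt_of_succ_lt hi⟩ ∩ V ⟨i + 1, hi⟩ := by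
    intro i
    by_cases hi : i + 1 < n
    · have hne : (V ⟨i, Nat.lt_of_succ_lt hi⟩ ∩ V ⟨i + 1, hi⟩).Nonempty := by
        rw [hVp]
        show |((i : ℤ)) - ((i + 1 : ℕ) : ℤ)| ≤ 1
        push_cast
        rw [show (i : ℤ) - (i + 1) = -1 by ring]
        norm_num
      obtain ⟨x₀, hx₀⟩ := hne
      obtain ⟨g, hg1, hg0⟩ := exists_ctf_pt x₀ _
        ((hVo ⟨i, Nat.lt_of_succ_lt hi⟩).inter (hVo ⟨i + 1, hi⟩)) hx₀
      refine ⟨{g}, fun hi' => ⟨x₀, fun x' hx' => ?_⟩⟩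
      apply hg0
      have := hx' g (Finset.mem_singleton_self g)
      rw [← this, hg1]
      norm_num
    · exact ⟨∅, fun hi' => absurd hi' hi⟩
  choose DD hDD using hpt
  refine ⟨G₁ ∪ (Finset.range n).biUnion DD, n, V, bx, hVo, hVu,
    (fun i => ⟨hbx1 i, hbx2 i⟩), hVp, ?_, ?_⟩
  · intro x
    obtain ⟨u, hu, hx⟩ := hG₁ x
    obtain ⟨i, -, rfl⟩ := Finset.mem_image.1 hu
    exact ⟨i, fun x' hx' => hx x' (eq1_mono Finset.subset_union_left hx')⟩
  · intro i hi
    obtain ⟨x₀, hx₀⟩ := hDD i hi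
    refine ⟨x₀, fun x' hx' => hx₀ x' (eq1_mono ?_ hx')⟩
    intro g hg
    exact Finset.mem_union_right _ (Finset.mem_biUnion.2
      ⟨i, Finset.mem_range.2 (Nat.lt_of_succ_lt hi), hg⟩)

lemma chainable_Y_of_X (hch : Chainable X) : Chainable (↥(Yset X)) := by
  intro U hUo hUc
  classical
  -- choose a rational box and a member of U around each point
  have hbasis : ∀ y : ↥(Yset X), ∃ (b : CBox) (u : Set ↥(Yset X)), u ∈ U ∧
      (y : ℕ → ℝ) ∈ vBox b ∧ (Subtype.val ⁻¹' (vBox b) : Set ↥(Yset X)) ⊆ u := by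
    intro y
    have hy : y ∈ ⋃₀ (U : Set (Set ↥(Yset X))) := by rw [hUc]; trivial
    obtain ⟨u, hu, hyu⟩ := hy
    obtain ⟨O, hOo, hOu⟩ := isOpen_induced_iff.1 (hUo u hu)
    have hyO : (y : ℕ → ℝ) ∈ O := by
      rw [← hOu] at hyu
      exact hyu
    obtain ⟨I, ua, hua, hpi⟩ := isOpen_pi_iff.1 hOo _ hyO
    have hrat : ∀ a : ℕ, a ∈ I → ∃ p q : ℚ, (y : ℕ → ℝ) a ∈ Ioo (p : ℝ) (q : ℝ) ∧
        Ioo (p : ℝ) (q : ℝ) ⊆ ua a := by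
      intro a ha
      obtain ⟨ε, hε, hball⟩ := Metric.isOpen_iff.1 (hua a ha).1 _ (hua a ha).2
      obtain ⟨p, hp1, hp2⟩ := exists_rat_btwn (show (y : ℕ → ℝ) a - ε < (y : ℕ → ℝ) a by linarith)
      obtain ⟨q, hq1, hq2⟩ := exists_rat_btwn (show (y : ℕ → ℝ) a < (y : ℕ → ℝ) a + ε by linarith)
      refine ⟨p, q, ⟨hp2, hq1⟩, ?_⟩
      intro v hv
      apply hball
      rw [Real.ball_eq_Ioo]
      obtain ⟨hv1, hv2⟩ := hv
      constructor <;> [linarith; linarith]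
    choose! pp qq hpq using hrat
    refine ⟨I.toList.map (fun a => (a, pp a, qq a)), u, hu, ?_, ?_⟩
    · rw [mem_vBox_iff]
      rintro e he
      obtain ⟨a, ha, rfl⟩ := List.mem_map.1 he
      exact (hpq a (Finset.mem_toList.1 ha)).1
    · intro y' hy'
      rw [mem_preimage, mem_vBox_iff] at hy'
      have : (y' : ℕ → ℝ) ∈ O := by
        apply hpi
        intro a ha
        exact (hpq a ha).2 (hy' (a, pp a, qq a)
          (List.mem_map.2 ⟨a, Finset.mem_toList.2 ha, rfl⟩))
      rw [← hOu]
      exact this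
  choose bb uu huu hybb hsub using hbasis
  -- finite subcover
  obtain ⟨t, ht⟩ := IsCompact.elim_finite_subcover (isCompact_univ (X := ↥(Yset X)))
    (fun y => (Subtype.val ⁻¹' (vBox (bb y)) : Set ↥(Yset X)))
    (fun y => (isOpen_vBox (bb y)).preimage continuous_subtype_val)
    (fun y _ => mem_iUnion.2 ⟨y, hybb y⟩)
  set c : CPat := t.toList.map bb with hc
  have hmemc : ∀ b, b ∈ c ↔ ∃ y ∈ t, bb y = b := by
    intro b
    rw [hc, List.mem_map]
    constructor
    · rintro ⟨y, hy, rfl⟩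
      exact ⟨y, Finset.mem_toList.1 hy, rfl⟩
    · rintro ⟨y, hy, rfl⟩
      exact ⟨y, Finset.mem_toList.2 hy, rfl⟩
  set k : ℕ := max (Encodable.encode c) (cpatBound c) with hk
  have hidx : ∀ b ∈ c, ∀ e ∈ b, e.1 < k :=
    fun b hb e he => Nat.lt_of_lt_of_le (lt_cpatBound hb he) (le_max_right _ _)
  have hcovX : ∀ x : X, ∃ b ∈ c, x ∈ cInterpBox (LL X k) b := by
    intro x
    have : qq X x ∈ ⋃ y ∈ t, (Subtype.val ⁻¹' (vBox (bb y)) : Set ↥(Yset X)) := ht trivial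
    obtain ⟨y, hy, hmem⟩ := mem_iUnion₂.1 this
    refine ⟨bb y, (hmemc _).2 ⟨y, hy, rfl⟩, ?_⟩
    rw [mem_cInterpBox_vBox (fun e he => hidx _ ((hmemc _).2 ⟨y, hy, rfl⟩) e he)]
    exact hmem
  have hex : ∃ G, ChainSpec c (LL X k) G := chain_exists hch c (LL X k) hcovX
  obtain ⟨n, V, bx, hVo, hVu, hbx, hVp, hfib, hpt⟩ := chainG_spec hex
  have hGr : ∀ g ∈ chainG c (LL X k), ∃ m, ff X m = g :=
    fun g hg => chainG_range (le_max_left _ _) hg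
  -- the pushed chain
  refine ⟨n, fun i => pushO (V i), fun i => isOpen_pushO (hVo i), ?_, ?_, ?_⟩
  · -- cover
    apply eq_univ_of_forall
    intro y
    obtain ⟨x₀, rfl⟩ := surjective_qq y
    obtain ⟨i, hi⟩ := hfib x₀
    exact mem_iUnion.2 ⟨i, mem_pushO_of_fiber hGr hi⟩
  · -- refinement
    intro i
    obtain ⟨y₀, hy₀, hbxeq⟩ := (hmemc (bx i)).1 (hbx i).1
    refine ⟨uu y₀, huu y₀, ?_⟩
    intro y hy
    apply hsub y₀
    rw [mem_preimage, hbxeq]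
    obtain ⟨x₀, hx₀⟩ := y.2
    have hx₀V : x₀ ∈ V i := hy x₀ hx₀
    have := (hbx i).2 hx₀V
    rw [mem_cInterpBox_vBox (fun e he => hidx _ (hbx i).1 e he)] at this
    rw [← hx₀]
    exact this
  · -- pattern
    intro i j
    constructor
    · rintro ⟨y, hyi, hyj⟩
      rw [← hVp i j]
      obtain ⟨x₀, hx₀⟩ := y.2
      exact ⟨x₀, hyi x₀ hx₀, hyj x₀ hx₀⟩
    · intro habs
      -- a nonempty fiber-witness inside V i (and V j when adjacent)
      have hwit : ∀ i₀ : Fin n, ∃ x₀ : X, ∀ x', eq1 (chainG c (LL X k)) x₀ x' → x' ∈ V i₀ := by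
        intro i₀
        by_cases hlt : (i₀ : ℕ) + 1 < n
        · obtain ⟨x₀, hx₀⟩ := hpt i₀ hlt
          refine ⟨x₀, fun x' hx' => ?_⟩
          have := (hx₀ x' hx').1
          have heq : (⟨(i₀ : ℕ), Nat.lt_of_succ_lt hlt⟩ : Fin n) = i₀ := Fin.ext rfl
          rwa [heq] at this
        · -- i₀ is the last index
          rcases Nat.lt_or_ge (i₀ : ℕ) 1 with h0 | h1
          · -- i₀ = 0 and n = 1 : V i₀ = univ
            have hn1 : n = 1 := by omega
            have huniv : V i₀ = univ := by
              apply eq_univ_of_forall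
              intro x
              have : x ∈ ⋃ i', V i' := by rw [hVu]; trivial
              obtain ⟨i', hi'⟩ := mem_iUnion.1 this
              have : i' = i₀ := by
                apply Fin.ext
                omega
              rwa [this] at hi'
            have hne : Nonempty X := by
              rcases isEmpty_or_nonempty X with hE | hN
              · exfalso
                -- if X empty then V i₀ = univ trivially and we need x₀ : X; handle by contradiction:
                -- V i₀ ∩ V i₀ = univ ∩ univ = univ = ∅, but hVp says nonempty ↔ |0| ≤ 1 true. contradiction
                have := (hVp i₀ i₀).2 (by simp)
                obtain ⟨x, -⟩ := this
                exact (IsEmpty.false x)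
              · exact hN
            obtain ⟨x₀⟩ := hne
            exact ⟨x₀, fun x' _ => by rw [huniv]; trivial⟩
          · -- use the previous adjacent pair
            have hlt' : ((i₀ : ℕ) - 1) + 1 < n := by omega
            obtain ⟨x₀, hx₀⟩ := hpt ((i₀ : ℕ) - 1) hlt'
            refine ⟨x₀, fun x' hx' => ?_⟩
            have := (hx₀ x' hx').2
            have heq : (⟨(i₀ : ℕ) - 1 + 1, hlt'⟩ : Fin n) = i₀ := by
              apply Fin.ext
              show (i₀ : ℕ) - 1 + 1 = (i₀ : ℕ)
              omega
            rwa [heq] at this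
      rw [abs_le] at habs
      obtain ⟨hab1, hab2⟩ := habs
      rcases lt_trichotomy ((i : ℕ) : ℤ) ((j : ℕ) : ℤ) with hij | hij | hij
      · -- j = i + 1
        have hj : (i : ℕ) + 1 = (j : ℕ) := by omega
        have hlt : (i : ℕ) + 1 < n := by rw [hj]; exact j.2
        obtain ⟨x₀, hx₀⟩ := hpt (i : ℕ) hlt
        refine ⟨qq X x₀, ?_, ?_⟩
        · apply mem_pushO_of_fiber hGr
          intro x' hx'
          have := (hx₀ x' hx').1
          have heq : (⟨(i : ℕ), Nat.lt_of_succ_lt hlt⟩ : Fin n) = i := Fin.ext rfl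
          rwa [heq] at this
        · apply mem_pushO_of_fiber hGr
          intro x' hx'
          have := (hx₀ x' hx').2
          have heq : (⟨(i : ℕ) + 1, hlt⟩ : Fin n) = j := Fin.ext hj
          rwa [heq] at this
      · -- i = j
        have hij' : i = j := Fin.ext (by omega)
        subst hij'
        obtain ⟨x₀, hx₀⟩ := hwit i
        exact ⟨qq X x₀, mem_pushO_of_fiber hGr hx₀, mem_pushO_of_fiber hGr hx₀⟩
      · -- i = j + 1
        have hj : (j : ℕ) + 1 = (i : ℕ) := by omega
        have hlt : (j : ℕ) + 1 < n := by rw [hj]; exact i.2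
        obtain ⟨x₀, hx₀⟩ := hpt (j : ℕ) hlt
        refine ⟨qq X x₀, ?_, ?_⟩
        · apply mem_pushO_of_fiber hGr
          intro x' hx'
          have := (hx₀ x' hx').2
          have heq : (⟨(j : ℕ) + 1, hlt⟩ : Fin n) = i := Fin.ext hj
          rwa [heq] at this
        · apply mem_pushO_of_fiber hGr
          intro x' hx'
          have := (hx₀ x' hx').1
          have heq : (⟨(j : ℕ), Nat.lt_of_succ_lt hlt⟩ : Fin n) = j := Fin.ext rfl
          rwa [heq] at this

lemma chainable_X_of_Y (h : Chainable (↥(Yset X))) : Chainable X := by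
  by_contra hX
  have hEx : ∃ U : Finset (Set X), (∀ u ∈ U, IsOpen u) ∧ ⋃₀ (U : Set (Set X)) = univ ∧
      ¬ (∃ (n : ℕ) (V : Fin n → Set X), (∀ i, IsOpen (V i)) ∧ (⋃ i, V i) = univ ∧
        (∀ i, ∃ u ∈ U, V i ⊆ u) ∧
        ∀ i j : Fin n, (V i ∩ V j).Nonempty ↔ |((i : ℕ) : ℤ) - ((j : ℕ) : ℤ)| ≤ 1) := by
    by_contra hc
    push_neg at hc
    apply hX
    intro U h1 h2
    exact hc U h1 h2
  obtain ⟨U₀, hU₀o, hU₀c, hU₀no⟩ := hEx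
  obtain ⟨G0, hG0⟩ := exists_fiber_refine U₀ hU₀o hU₀c
  have hseed : ∃ G, SeedChainSpec (X := X) G := ⟨G0, U₀, hU₀o, hU₀c, hU₀no, hG0⟩
  obtain ⟨U₁, h1o, h1c, h1no, h1fib⟩ := seedChain_spec hseed
  have hGr : ∀ g ∈ seedChain X, ∃ n, ff X n = g := fun g hg => seedChain_range hg
  -- cover of Y
  set 𝒲 : Finset (Set ↥(Yset X)) := Finset.image (fun u => pushO u) U₁ with h𝒲
  have h𝒲o : ∀ w ∈ 𝒲, IsOpen w := by
    rintro w hw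
    obtain ⟨u, hu, rfl⟩ := Finset.mem_image.1 hw
    exact isOpen_pushO (h1o u hu)
  have h𝒲c : ⋃₀ (𝒲 : Set (Set ↥(Yset X))) = univ := by
    apply eq_univ_of_forall
    intro y
    obtain ⟨x₀, rfl⟩ := surjective_qq y
    obtain ⟨u, hu, hfibu⟩ := h1fib x₀
    exact ⟨pushO u, Finset.mem_coe.2 (Finset.mem_image_of_mem _ hu), mem_pushO_of_fiber hGr hfibu⟩
  obtain ⟨n, V', hV'o, hV'u, hV'r, hV'p⟩ := h 𝒲 h𝒲o h𝒲c
  apply h1no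
  refine ⟨n, fun i => qq X ⁻¹' (V' i), fun i => (hV'o i).preimage continuous_qq, ?_, ?_, ?_⟩
  · rw [← preimage_iUnion, hV'u, preimage_univ]
  · intro i
    obtain ⟨w, hw, hV'w⟩ := hV'r i
    obtain ⟨u, hu, rfl⟩ := Finset.mem_image.1 hw
    exact ⟨u, hu, (preimage_mono hV'w).trans pull_pushO⟩
  · intro i j
    rw [← hV'p i j]
    constructor
    · rintro ⟨x, hxi, hxj⟩
      exact ⟨qq X x, hxi, hxj⟩
    · rintro ⟨y, hyi, hyj⟩
      obtain ⟨x, rfl⟩ := surjective_qq y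
      exact ⟨x, hyi, hyj⟩

end Chain

end MR

theorem metric_reflection (X : Type*) [TopologicalSpace X]
    [CompactSpace X] [T2Space X] [ConnectedSpace X] :
    ∃ (Y : Type) (_ : TopologicalSpace Y),
      TopologicalSpace.MetrizableSpace Y ∧ CompactSpace Y ∧ T2Space Y ∧ ConnectedSpace Y ∧
      ∃ q : X → Y, Continuous q ∧ Function.Surjective q ∧
        (Chainable Y ↔ Chainable X) ∧
        (SpanZero Y ↔ SpanZero X) ∧
        (SemispanZero Y ↔ SemispanZero X) ∧
        (SurjectiveSpanZero Y ↔ SurjectiveSpanZero X) ∧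
        (SurjectiveSemispanZero Y ↔ SurjectiveSemispanZero X) := by
  classical
  refine ⟨↥(MR.Yset X), inferInstance, inferInstance, inferInstance, inferInstance,
    isConnected_iff_connectedSpace.1 (isConnected_range MR.continuous_qmap),
    MR.qq X, MR.continuous_qq, MR.surjective_qq, ?_, ?_, ?_, ?_, ?_⟩
  · exact ⟨fun h => MR.chainable_X_of_Y h, fun h => MR.chainable_Y_of_X h⟩
  · exact ⟨fun h => MR.spanZero_X_of_Y h, fun h => MR.spanZero_Y_of_X h⟩
  · exact ⟨fun h => MR.semispanZero_X_of_Y h, fun h => MR.semispanZero_Y_of_X h⟩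
  · exact ⟨fun h => MR.surjSpanZero_X_of_Y h, fun h => MR.surjSpanZero_Y_of_X h⟩
  · exact ⟨fun h => MR.surjSemispanZero_X_of_Y h, fun h => MR.surjSemispanZero_Y_of_X h⟩
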